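/- arXiv:1804.05317 — 10 statements merged into one kernel-verified Lean document; each statement's English description precedes it below -/
import Mathlib

section
/- Let E be a nonzero complex normed vector space and Λ a nonempty compact set (in the operator norm) of continuous linear functionals on E. Let ω, ω', ω'' ∈ E be nonzero vectors such that φ(ω) ≠ 0, φ(ω') ≠ 0 and φ(ω'') ≠ 0 for every φ ∈ Λ. Then (i) d_Λ(ω, ω') ≥ 0; (ii) d_Λ(ω, ω') = d_Λ(ω', ω); (iii) d_Λ(ω, ω'') ≤ d_Λ(ω, ω') + d_Λ(ω', ω''). In other words, d_Λ is a symmetric pseudo-metric (a symmetric weak metric). -/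
/-- The generalized Hilbert pseudo-metric associated to a set `Λ` of continuous
linear functionals on a complex normed space. -/
noncomputable def hilbertD {E : Type*} [NormedAddCommGroup E] [NormedSpace ℂ E]
    (Λ : Set (E →L[ℂ] ℂ)) (ω ω' : E) : ℝ :=
  Real.log (sSup {r : ℝ | ∃ φ ∈ Λ, ∃ φ' ∈ Λ,
    r = ‖φ ω * φ' ω'‖ / ‖φ ω' * φ' ω‖})

namespace HilbertDAux

variable {E : Type*} [NormedAddCommGroup E] [NormedSpace ℂ E]

def hSet (Λ : Set (E →L[ℂ] ℂ)) (ω ω' : E) : Set ℝ :=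
  {r : ℝ | ∃ φ ∈ Λ, ∃ φ' ∈ Λ,
    r = ‖φ ω * φ' ω'‖ / ‖φ ω' * φ' ω‖}

lemma hSet_eq_image (Λ : Set (E →L[ℂ] ℂ)) (ω ω' : E) :
    hSet Λ ω ω' = (fun p : (E →L[ℂ] ℂ) × (E →L[ℂ] ℂ) =>
      ‖p.1 ω * p.2 ω'‖ / ‖p.1 ω' * p.2 ω‖) '' (Λ ×ˢ Λ) := by
  ext r
  constructor
  · rintro ⟨φ, hφ, φ', hφ', rfl⟩
    exact ⟨(φ, φ'), ⟨hφ, hφ'⟩, rfl⟩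
  · rintro ⟨⟨φ, φ'⟩, ⟨hφ, hφ'⟩, rfl⟩
    exact ⟨φ, hφ, φ', hφ', rfl⟩

lemma hSet_compact (Λ : Set (E →L[ℂ] ℂ)) (hΛc : IsCompact Λ) (ω ω' : E)
    (h1 : ∀ φ ∈ Λ, φ ω ≠ 0) (h2 : ∀ φ ∈ Λ, φ ω' ≠ 0) :
    IsCompact (hSet Λ ω ω') := by
  rw [hSet_eq_image]
  apply (hΛc.prod hΛc).image_of_continuousOn
  have hc1 : Continuous fun p : (E →L[ℂ] ℂ) × (E →L[ℂ] ℂ) =>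
      ‖p.1 ω * p.2 ω'‖ :=
    continuous_norm.comp
      (((ContinuousLinearMap.apply ℂ ℂ ω).continuous.comp continuous_fst).mul
        (((ContinuousLinearMap.apply ℂ ℂ ω').continuous.comp continuous_snd)))
  have hc2 : Continuous fun p : (E →L[ℂ] ℂ) × (E →L[ℂ] ℂ) =>
      ‖p.1 ω' * p.2 ω‖ :=
    continuous_norm.comp
      (((ContinuousLinearMap.apply ℂ ℂ ω').continuous.comp continuous_fst).mul
        (((ContinuousLinearMap.apply ℂ ℂ ω).continuous.comp continuous_snd)))
  exact ContinuousOn.div hc1.continuousOn hc2.continuousOn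
    (fun p hp => by
      simp only [norm_mul, map_mul, ne_eq, mul_eq_zero, norm_eq_zero, map_eq_zero]
      push_neg
      exact ⟨h2 p.1 hp.1, h1 p.2 hp.2⟩)

lemma one_mem_hSet (Λ : Set (E →L[ℂ] ℂ)) (hΛne : Λ.Nonempty) (ω ω' : E)
    (h1 : ∀ φ ∈ Λ, φ ω ≠ 0) (h2 : ∀ φ ∈ Λ, φ ω' ≠ 0) :
    (1 : ℝ) ∈ hSet Λ ω ω' := by
  obtain ⟨φ, hφ⟩ := hΛne
  refine ⟨φ, hφ, φ, hφ, ?_⟩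
  rw [mul_comm (φ ω') (φ ω), div_self]
  simp only [norm_mul, map_mul, ne_eq, mul_eq_zero, norm_eq_zero, map_eq_zero]
  push_neg
  exact ⟨h1 φ hφ, h2 φ hφ⟩

lemma one_le_sSup (Λ : Set (E →L[ℂ] ℂ)) (hΛc : IsCompact Λ) (hΛne : Λ.Nonempty)
    (ω ω' : E) (h1 : ∀ φ ∈ Λ, φ ω ≠ 0) (h2 : ∀ φ ∈ Λ, φ ω' ≠ 0) :
    (1 : ℝ) ≤ sSup (hSet Λ ω ω') :=
  le_csSup (hSet_compact Λ hΛc ω ω' h1 h2).bddAbove (one_mem_hSet Λ hΛne ω ω' h1 h2)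

lemma hSet_symm (Λ : Set (E →L[ℂ] ℂ)) (ω ω' : E) :
    hSet Λ ω ω' = hSet Λ ω' ω := by
  have key : ∀ a b : E, hSet Λ a b ⊆ hSet Λ b a := by
    rintro a b r ⟨φ, hφ, φ', hφ', rfl⟩
    exact ⟨φ', hφ', φ, hφ, by rw [mul_comm (φ' b) (φ a), mul_comm (φ' a) (φ b)]⟩
  exact le_antisymm (key ω ω') (key ω' ω)

end HilbertDAux

theorem hilbertD_pseudometric
    {E : Type*} [NormedAddCommGroup E] [NormedSpace ℂ E] [Nontrivial E]
    (Λ : Set (E →L[ℂ] ℂ)) (hΛc : IsCompact Λ) (hΛne : Λ.Nonempty)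
    (ω ω' ω'' : E) (hω : ω ≠ 0) (hω' : ω' ≠ 0) (hω'' : ω'' ≠ 0)
    (h1 : ∀ φ ∈ Λ, φ ω ≠ 0) (h2 : ∀ φ ∈ Λ, φ ω' ≠ 0) (h3 : ∀ φ ∈ Λ, φ ω'' ≠ 0) :
    0 ≤ hilbertD Λ ω ω' ∧
    hilbertD Λ ω ω' = hilbertD Λ ω' ω ∧
    hilbertD Λ ω ω'' ≤ hilbertD Λ ω ω' + hilbertD Λ ω' ω'' := by
  open HilbertDAux in
  have hd : ∀ a b : E, hilbertD Λ a b = Real.log (sSup (hSet Λ a b)) := fun a b => rfl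
  have hS1 := one_le_sSup Λ hΛc hΛne ω ω' h1 h2
  have hS2 := one_le_sSup Λ hΛc hΛne ω' ω'' h2 h3
  have hpos1 : (0:ℝ) < sSup (hSet Λ ω ω') := lt_of_lt_of_le one_pos hS1
  have hpos2 : (0:ℝ) < sSup (hSet Λ ω' ω'') := lt_of_lt_of_le one_pos hS2
  refine ⟨?_, ?_, ?_⟩
  · rw [hd]
    exact Real.log_nonneg hS1
  · rw [hd, hd, hSet_symm]
  · rw [hd, hd, hd, ← Real.log_mul (ne_of_gt hpos1) (ne_of_gt hpos2)]
    apply Real.log_le_log (lt_of_lt_of_le one_pos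
      (one_le_sSup Λ hΛc hΛne ω ω'' h1 h3))
    apply csSup_le ⟨1, one_mem_hSet Λ hΛne ω ω'' h1 h3⟩
    rintro r ⟨φ, hφ, φ', hφ', rfl⟩
    have hb1 := (hSet_compact Λ hΛc ω ω' h1 h2).bddAbove
    have hb2 := (hSet_compact Λ hΛc ω' ω'' h2 h3).bddAbove
    have ha1 : ‖φ ω * φ' ω'‖ / ‖φ ω' * φ' ω‖ ∈ hSet Λ ω ω' :=
      ⟨φ, hφ, φ', hφ', rfl⟩
    have ha2 : ‖φ ω' * φ' ω''‖ / ‖φ ω'' * φ' ω'‖ ∈ hSet Λ ω' ω'' :=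
      ⟨φ, hφ, φ', hφ', rfl⟩
    have hkey : ‖φ ω * φ' ω''‖ / ‖φ ω'' * φ' ω‖
        = (‖φ ω * φ' ω'‖ / ‖φ ω' * φ' ω‖)
          * (‖φ ω' * φ' ω''‖ / ‖φ ω'' * φ' ω'‖) := by
      have n1 : ‖φ ω'‖ ≠ 0 := by simp [h2 φ hφ]
      have n2 : ‖φ' ω'‖ ≠ 0 := by simp [h2 φ' hφ']
      have n3 : ‖φ ω''‖ ≠ 0 := by simp [h3 φ hφ]
      have n4 : ‖φ' ω‖ ≠ 0 := by simp [h1 φ' hφ']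
      simp only [norm_mul]
      field_simp
    rw [hkey]
    exact mul_le_mul (le_csSup hb1 ha1) (le_csSup hb2 ha2)
      (div_nonneg (norm_nonneg _) (norm_nonneg _)) (le_of_lt hpos1)
end

section
/- Let E be a nonzero complex normed vector space, Λ a nonempty compact set of continuous linear functionals on E, and ω, ω' ∈ E nonzero vectors with φ(ω) ≠ 0 and φ(ω') ≠ 0 for every φ ∈ Λ. Then d_Λ(ω, ω') = 0 if and only if |φ(ω) · φ'(ω')| = |φ(ω') · φ'(ω)| for all φ, φ' ∈ Λ, i.e. d_Λ fails to separate ω and ω' exactly when every cross-ratio [φ, φ', ω, ω'] has modulus 1. -/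
theorem hilbertD_eq_zero_iff
    {E : Type*} [NormedAddCommGroup E] [NormedSpace ℂ E] [Nontrivial E]
    (Λ : Set (E →L[ℂ] ℂ)) (hΛc : IsCompact Λ) (hΛne : Λ.Nonempty)
    (ω ω' : E) (hω : ω ≠ 0) (hω' : ω' ≠ 0)
    (h1 : ∀ φ ∈ Λ, φ ω ≠ 0) (h2 : ∀ φ ∈ Λ, φ ω' ≠ 0) :
    hilbertD Λ ω ω' = 0 ↔
      ∀ φ ∈ Λ, ∀ φ' ∈ Λ,
        ‖φ ω * φ' ω'‖ = ‖φ ω' * φ' ω‖ := by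
  set S : Set ℝ := {r : ℝ | ∃ φ ∈ Λ, ∃ φ' ∈ Λ,
    r = ‖φ ω * φ' ω'‖ / ‖φ ω' * φ' ω‖} with hSdef
  obtain ⟨ψ, hψ⟩ := hΛne
  have habne : ∀ φ ∈ Λ, ∀ φ' ∈ Λ, ‖φ ω' * φ' ω‖ ≠ 0 := by
    intro φ hφ φ' hφ'
    exact norm_ne_zero_iff.mpr (mul_ne_zero (h2 φ hφ) (h1 φ' hφ'))
  have habpos : ∀ φ ∈ Λ, ∀ φ' ∈ Λ, 0 < ‖φ ω' * φ' ω‖ := by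
    intro φ hφ φ' hφ'
    exact (norm_pos_iff.mpr (mul_ne_zero (h2 φ hφ) (h1 φ' hφ')))
  have habpos' : ∀ φ ∈ Λ, ∀ φ' ∈ Λ, 0 < ‖φ ω * φ' ω'‖ := by
    intro φ hφ φ' hφ'
    exact (norm_pos_iff.mpr (mul_ne_zero (h1 φ hφ) (h2 φ' hφ')))
  have h1S : (1 : ℝ) ∈ S := by
    refine ⟨ψ, hψ, ψ, hψ, ?_⟩
    rw [mul_comm (ψ ω) (ψ ω'), div_self (habne ψ hψ ψ hψ)]
  -- boundedness above
  have hcont : ContinuousOn (fun p : (E →L[ℂ] ℂ) × (E →L[ℂ] ℂ) =>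
      ‖p.1 ω * p.2 ω'‖ / ‖p.1 ω' * p.2 ω‖) (Λ ×ˢ Λ) := by
    apply ContinuousOn.div
    · apply Continuous.continuousOn
      exact continuous_norm.comp (by fun_prop)
    · apply Continuous.continuousOn
      exact continuous_norm.comp (by fun_prop)
    · rintro ⟨φ, φ'⟩ ⟨hφ, hφ'⟩
      exact habne φ hφ φ' hφ'
  have hsub : S ⊆ (fun p : (E →L[ℂ] ℂ) × (E →L[ℂ] ℂ) =>
      ‖p.1 ω * p.2 ω'‖ / ‖p.1 ω' * p.2 ω‖) '' (Λ ×ˢ Λ) := by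
    rintro r ⟨φ, hφ, φ', hφ', rfl⟩
    exact ⟨(φ, φ'), ⟨hφ, hφ'⟩, rfl⟩
  have hbdd : BddAbove S :=
    (((hΛc.prod hΛc).image_of_continuousOn hcont).bddAbove).mono hsub
  have hsup1 : (1 : ℝ) ≤ sSup S := le_csSup hbdd h1S
  have hd : hilbertD Λ ω ω' = Real.log (sSup S) := rfl
  rw [hd]
  constructor
  · intro h0 φ hφ φ' hφ'
    have hsup : sSup S = 1 := by
      rcases Real.log_eq_zero.mp h0 with h | h | h
      · linarith
      · exact h
      · linarith
    have hle : ∀ r ∈ S, r ≤ 1 := by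
      intro r hr
      calc r ≤ sSup S := le_csSup hbdd hr
        _ = 1 := hsup
    have ha : ‖φ ω * φ' ω'‖ / ‖φ ω' * φ' ω‖ ≤ 1 :=
      hle _ ⟨φ, hφ, φ', hφ', rfl⟩
    have hb : ‖φ' ω * φ ω'‖ / ‖φ' ω' * φ ω‖ ≤ 1 :=
      hle _ ⟨φ', hφ', φ, hφ, rfl⟩
    have h1 := (div_le_one (habpos φ hφ φ' hφ')).mp ha
    have h2 := (div_le_one (habpos φ' hφ' φ hφ)).mp hb
    rw [mul_comm (φ' ω) (φ ω'), mul_comm (φ' ω') (φ ω)] at h2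
    exact le_antisymm h1 h2
  · intro heq
    have hall : ∀ r ∈ S, r = 1 := by
      rintro r ⟨φ, hφ, φ', hφ', rfl⟩
      rw [heq φ hφ φ' hφ', div_self (habne φ hφ φ' hφ')]
    have : sSup S = 1 :=
      le_antisymm (csSup_le ⟨1, h1S⟩ fun r hr => (hall r hr).le) hsup1
    rw [this, Real.log_one]
end

section
/- Let Λ ⊆ ℂ be a nonempty set and let ω, ω' be two distinct points of ℂ \ Λ. Then the following are equivalent: (a) for all a, b ∈ Λ, |(a − ω)·(b − ω')| = |(a − ω')·(b − ω)|; (b) either there exist c ∈ ℂ and r > 0 such that |a − c| = r for all a ∈ Λ and (ω − c) · conj(ω' − c) = r², or there exist q ∈ ℂ and e ∈ ℂ with |e| = 1 such that Λ ⊆ { q + t·e : t ∈ ℝ } and ω' = q + e² · conj(ω − q). That is, all cross-ratios [a, b, ω, ω'] have modulus 1 exactly when Λ is contained in a circle with respect to which ω and ω' are inverse points, or in a real line with respect to which ω and ω' are mirror images. -/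
private lemma sep_line_z (a ω ω' : ℂ) :
    (a - (ω+ω')/2) * (starRingEnd ℂ) (ω'-ω)
      + (starRingEnd ℂ) ((a - (ω+ω')/2) * (starRingEnd ℂ) (ω'-ω))
    = (a-ω)*(starRingEnd ℂ) (a-ω) - (a-ω')*(starRingEnd ℂ) (a-ω') := by
  simp only [map_mul, map_sub, map_div₀, map_add, Complex.conj_conj, map_ofNat]
  ring

private lemma sep_abs_sq (x r : ℝ) (hx : 0 ≤ x) (hr : 0 < r) (h : x ^ 2 = r ^ 2) : x = r := by
  nlinarith

private lemma sep_mul_conj_of_abs (z : ℂ) (r : ℝ) (h : ‖z‖ = r) :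
    z * (starRingEnd ℂ) z = (r : ℂ) ^ 2 := by
  rw [Complex.mul_conj, ← Complex.sq_norm, h]
  push_cast
  ring

private lemma sep_line_refl (ω ω' : ℂ) (hne : ω ≠ ω') :
    ω' = (ω+ω')/2 + (Complex.I * (ω'-ω) / (‖ω'-ω‖ : ℂ))^2
        * (starRingEnd ℂ) (ω - (ω+ω')/2) := by
  have hd : ω' - ω ≠ 0 := sub_ne_zero.mpr (Ne.symm hne)
  have hA : (‖ω'-ω‖ : ℂ) ≠ 0 := by
    exact_mod_cast norm_ne_zero_iff.mpr hd
  have hA2 : (‖ω'-ω‖ : ℂ)^2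
      = (ω'-ω) * ((starRingEnd ℂ) ω' - (starRingEnd ℂ) ω) := by
    rw [← map_sub, Complex.mul_conj, ← Complex.sq_norm]
    push_cast; ring
  have hc : (starRingEnd ℂ) (ω - (ω+ω')/2)
      = -((starRingEnd ℂ) ω' - (starRingEnd ℂ) ω)/2 := by
    simp only [map_sub, map_add, map_div₀, map_ofNat]
    ring
  rw [hc, div_pow, mul_pow, Complex.I_sq]
  field_simp
  linear_combination (ω'-ω) * hA2

theorem separation_criterion_CP1
    (Λ : Set ℂ) (hΛne : Λ.Nonempty)
    (ω ω' : ℂ) (hω : ω ∉ Λ) (hω' : ω' ∉ Λ) (hne : ω ≠ ω') :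
    (∀ a ∈ Λ, ∀ b ∈ Λ,
        ‖(a - ω) * (b - ω')‖ = ‖(a - ω') * (b - ω)‖) ↔
      ((∃ c : ℂ, ∃ r : ℝ, 0 < r ∧ (∀ a ∈ Λ, ‖a - c‖ = r) ∧
          (ω - c) * (starRingEnd ℂ) (ω' - c) = (r : ℂ) ^ 2) ∨
        (∃ q e : ℂ, ‖e‖ = 1 ∧
          (∀ a ∈ Λ, ∃ t : ℝ, a = q + (t : ℂ) * e) ∧
          ω' = q + e ^ 2 * (starRingEnd ℂ) (ω - q))) := by
  constructor
  · intro h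
    obtain ⟨a₀, ha₀⟩ := hΛne
    have ha₀ω : a₀ - ω ≠ 0 := sub_ne_zero.mpr (fun h' => hω (h' ▸ ha₀))
    have ha₀ω' : a₀ - ω' ≠ 0 := sub_ne_zero.mpr (fun h' => hω' (h' ▸ ha₀))
    have hN : 0 < Complex.normSq (a₀ - ω) := Complex.normSq_pos.mpr ha₀ω
    have hN' : 0 < Complex.normSq (a₀ - ω') := Complex.normSq_pos.mpr ha₀ω'
    set K : ℝ := Complex.normSq (a₀ - ω) / Complex.normSq (a₀ - ω') with hKdef
    have hK0 : 0 < K := div_pos hN hN'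
    have hKa : ∀ a ∈ Λ, Complex.normSq (a - ω) = K * Complex.normSq (a - ω') := by
      intro a ha
      have h1 := h a ha a₀ ha₀
      have h2 : Complex.normSq (a - ω) * Complex.normSq (a₀ - ω')
          = Complex.normSq (a - ω') * Complex.normSq (a₀ - ω) := by
        have := congrArg (· ^ 2) h1
        simpa [norm_mul, mul_pow, Complex.sq_norm] using this
      rw [hKdef, div_mul_eq_mul_div, eq_div_iff hN'.ne']
      linarith
    have hCa : ∀ a ∈ Λ, (a - ω) * (starRingEnd ℂ) (a - ω)
        = (K : ℂ) * ((a - ω') * (starRingEnd ℂ) (a - ω')) := by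
      intro a ha
      rw [Complex.mul_conj, Complex.mul_conj, hKa a ha]
      push_cast; ring
    by_cases hK1 : K = 1
    · -- line case
      right
      have hd : ω' - ω ≠ 0 := sub_ne_zero.mpr (Ne.symm hne)
      have hA : (‖ω'-ω‖ : ℂ) ≠ 0 := by
        exact_mod_cast norm_ne_zero_iff.mpr hd
      have hA2 : (‖ω'-ω‖ : ℂ)^2 = (ω'-ω) * (starRingEnd ℂ) (ω'-ω) := by
        rw [Complex.mul_conj, ← Complex.sq_norm]; push_cast; ring
      refine ⟨(ω+ω')/2, Complex.I * (ω'-ω) / (‖ω'-ω‖ : ℂ), ?_, ?_, ?_⟩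
      · rw [norm_div, norm_mul, Complex.norm_I, Complex.norm_real, one_mul, Real.norm_eq_abs,
          abs_of_nonneg (norm_nonneg _), div_self (norm_ne_zero_iff.mpr hd)]
      · intro a ha
        have hE : (a-ω)*(starRingEnd ℂ) (a-ω) = (a-ω')*(starRingEnd ℂ) (a-ω') := by
          have := hCa a ha; rw [hK1] at this; simpa using this
        set z : ℂ := (a - (ω+ω')/2) * (starRingEnd ℂ) (ω'-ω) with hzdef
        have hz0 : z + (starRingEnd ℂ) z = 0 := by
          rw [hzdef, sep_line_z a ω ω', hE]; ring
        have hre : z.re = 0 := by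
          have := congrArg Complex.re hz0
          simp [Complex.add_re, Complex.conj_re] at this
          linarith
        have hzi : z = (z.im : ℂ) * Complex.I := by
          conv_lhs => rw [← Complex.re_add_im z]
          rw [hre]; simp
        refine ⟨z.im / ‖ω'-ω‖, ?_⟩
        have hz : (a - (ω+ω')/2) * (starRingEnd ℂ) (ω'-ω) = (z.im : ℂ) * Complex.I := by
          rw [← hzdef]; exact hzi
        have hkey : (↑(z.im / ‖ω'-ω‖) : ℂ)
            * (Complex.I * (ω'-ω) / (‖ω'-ω‖ : ℂ)) = a - (ω+ω')/2 := by
          push_cast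
          rw [div_mul_div_comm, div_eq_iff (mul_ne_zero hA hA)]
          linear_combination (-(a - (ω+ω')/2)) * hA2 - (ω'-ω) * hz
        linear_combination -hkey
      · exact sep_line_refl ω ω' hne
    · -- circle case
      left
      have hK1C : (1:ℂ) - (K:ℂ) ≠ 0 :=
        sub_ne_zero.mpr (fun hEq => hK1 (by exact_mod_cast hEq.symm))
      have h1K : (1:ℝ) - K ≠ 0 := sub_ne_zero.mpr (fun hEq => hK1 hEq.symm)
      set c : ℂ := (ω - (K:ℂ)*ω')/(1-(K:ℂ)) with hcdef
      set r : ℝ := Real.sqrt K * ‖ω-ω'‖ / |1-K| with hrdef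
      have hr : 0 < r := div_pos (mul_pos (Real.sqrt_pos.mpr hK0)
        (norm_pos_iff.mpr (sub_ne_zero.mpr hne))) (abs_pos.mpr h1K)
      have hrr : r^2 * (1-K)^2 = K * Complex.normSq (ω-ω') := by
        rw [hrdef, div_pow, mul_pow, Real.sq_sqrt hK0.le, sq_abs, Complex.sq_norm]
        field_simp
      have hrrC : (r:ℂ)^2 * ((1:ℂ)-(K:ℂ))^2
          = (K:ℂ) * ((ω-ω') * ((starRingEnd ℂ) ω - (starRingEnd ℂ) ω')) := by
        rw [← map_sub, Complex.mul_conj]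
        have := congrArg (Complex.ofReal) hrr
        push_cast at this ⊢
        linear_combination this
      have hconjc : (starRingEnd ℂ) c
          = ((starRingEnd ℂ) ω - (K:ℂ) * (starRingEnd ℂ) ω')/(1-(K:ℂ)) := by
        rw [hcdef]
        simp [map_div₀, map_sub, map_mul, Complex.conj_ofReal]
      refine ⟨c, r, hr, ?_, ?_⟩
      · intro a ha
        have hca := hCa a ha
        have hacC : (a - c) * (starRingEnd ℂ) (a - c) = (r:ℂ)^2 := by
          rw [map_sub, hconjc, hcdef]
          simp only [map_sub] at hca
          field_simp
          linear_combination ((1:ℂ)-(K:ℂ)) * hca - hrrC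
        have hnsq : Complex.normSq (a-c) = r^2 := by
          have : ((Complex.normSq (a-c) : ℝ) : ℂ) = ((r^2 : ℝ) : ℂ) := by
            rw [← Complex.mul_conj, hacC]; push_cast; ring
          exact_mod_cast this
        exact sep_abs_sq _ _ (norm_nonneg _) hr (by rw [Complex.sq_norm]; exact hnsq)
      · rw [map_sub, hconjc, hcdef]
        field_simp
        linear_combination -hrrC
  · intro h
    rcases h with ⟨c, r, hr, hmem, hinv⟩ | ⟨q, e, he1, hmem, hω'e⟩
    · -- circle
      have hωc : ω - c ≠ 0 := by
        intro h0
        rw [h0, zero_mul] at hinv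
        have : r^2 = 0 := by exact_mod_cast hinv.symm
        nlinarith
      have habsωc : ‖ω - c‖ ≠ 0 := norm_ne_zero_iff.mpr hωc
      have key : ∀ a ∈ Λ, ‖a - ω'‖ * ‖ω - c‖
          = r * ‖a - ω‖ := by
        intro a ha
        have hca : (a-c) * (starRingEnd ℂ) (a-c) = (r:ℂ)^2 :=
          sep_mul_conj_of_abs _ _ (hmem a ha)
        have hinv' : (ω'-c) * (starRingEnd ℂ) (ω-c) = (r:ℂ)^2 := by
          have := congrArg (starRingEnd ℂ) hinv
          simp only [map_mul, Complex.conj_conj, map_pow] at this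
          rw [mul_comm] at this
          rw [this]
          simp
        have hid : (a-ω') * (starRingEnd ℂ) (ω-c) = (a-c) * (starRingEnd ℂ) (ω-a) := by
          simp only [map_sub] at hca hinv' ⊢
          linear_combination hca - hinv'
        have h3 := congrArg norm hid
        rw [norm_mul, norm_mul, Complex.norm_conj, Complex.norm_conj, hmem a ha,
          norm_sub_rev ω a] at h3
        exact h3
      intro a ha b hb
      have h1 := key a ha
      have h2 := key b hb
      apply mul_right_cancel₀ habsωc
      rw [norm_mul, norm_mul]
      linear_combination ‖a-ω‖ * h2 - ‖b-ω‖ * h1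
    · -- line
      have hee : e * (starRingEnd ℂ) e = 1 := by
        have := sep_mul_conj_of_abs e 1 he1
        simpa using this
      have key : ∀ a ∈ Λ, ‖a - ω'‖ = ‖a - ω‖ := by
        intro a ha
        obtain ⟨t, hta⟩ := hmem a ha
        have hid : a - ω' = e^2 * (starRingEnd ℂ) (a - ω) := by
          rw [hta, hω'e]
          simp only [map_sub, map_add, map_mul, Complex.conj_ofReal]
          linear_combination (-((t:ℂ) * e)) * hee
        rw [hid, norm_mul, norm_pow, he1, Complex.norm_conj]
        ring
      intro a ha b hb
      rw [norm_mul, norm_mul, key a ha, key b hb]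
end

section
/- Let Λ ⊆ ℂ be a nonempty compact set that is not contained in any circle { z : |z − c| = r } (c ∈ ℂ, r > 0) and not contained in any real-affine line { q + t·e : t ∈ ℝ } (q, e ∈ ℂ, e ≠ 0). Then for all distinct ω, ω' ∈ ℂ \ Λ there exist a, b ∈ Λ with |(a − ω)·(b − ω')| ≠ |(a − ω')·(b − ω)|; consequently d_Λ(ω, ω') > 0, so d_Λ separates the points of ℂ \ Λ. -/
/-- The generalized Hilbert pseudo-metric on the complement of a set `Λ ⊆ ℂ`,
where a point `a ∈ Λ` is identified with the linear form `z ↦ z - a`. -/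
noncomputable def hilbertDC (Λ : Set ℂ) (ω ω' : ℂ) : ℝ :=
  Real.log (sSup {r : ℝ | ∃ a ∈ Λ, ∃ b ∈ Λ,
    r = ‖(a - ω) * (b - ω')‖ / ‖(a - ω') * (b - ω)‖})

private lemma real_mult (z e : ℂ) (he : e ≠ 0) (him : (z * (starRingEnd ℂ) e).im = 0) :
    z = (((z * (starRingEnd ℂ) e).re / Complex.normSq e : ℝ) : ℂ) * e := by
  have hns : (Complex.normSq e : ℂ) ≠ 0 := by
    exact_mod_cast (Complex.normSq_pos.mpr he).ne'
  have h1 : z * (starRingEnd ℂ) e = (((z * (starRingEnd ℂ) e).re : ℝ) : ℂ) :=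
    Complex.ext rfl (by simpa using him)
  have h2 : z * ((starRingEnd ℂ) e * e) = (((z * (starRingEnd ℂ) e).re : ℝ) : ℂ) * e := by
    conv_lhs => rw [← mul_assoc, h1]
  rw [mul_comm ((starRingEnd ℂ) e) e, Complex.mul_conj] at h2
  rw [Complex.ofReal_div, div_mul_eq_mul_div, eq_div_iff hns]
  linear_combination h2

private lemma im_zero_of_normSq_eq (a ω ω' : ℂ)
    (hn : Complex.normSq (a - ω) = Complex.normSq (a - ω')) :
    ((a - (ω + ω')/2) * (starRingEnd ℂ) (Complex.I * (ω' - ω))).im = 0 := by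
  simp only [Complex.normSq_apply, Complex.sub_re, Complex.sub_im] at hn
  simp [Complex.mul_im, Complex.mul_re, Complex.sub_re, Complex.sub_im, Complex.add_re,
    Complex.add_im, Complex.div_re, Complex.div_im, Complex.normSq_apply]
  ring_nf
  nlinarith [hn]

private lemma normSq_circle (a ω ω' : ℂ) (k : ℝ)
    (hn : Complex.normSq (a - ω) = k^2 * Complex.normSq (a - ω')) :
    Complex.normSq ((((1 - k^2 : ℝ)):ℂ) * a - ω + ((k^2 : ℝ):ℂ) * ω')
      = k^2 * Complex.normSq (ω - ω') := by
  simp only [Complex.normSq_apply, Complex.sub_re, Complex.sub_im, Complex.add_re, Complex.add_im,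
    Complex.mul_re, Complex.mul_im, Complex.ofReal_re, Complex.ofReal_im] at *
  linear_combination (1 - k^2) * hn

theorem separating_of_not_circle_not_line
    (Λ : Set ℂ) (hΛne : Λ.Nonempty) (hΛc : IsCompact Λ)
    (hcircle : ¬ ∃ (c : ℂ) (r : ℝ), 0 < r ∧ ∀ a ∈ Λ, ‖a - c‖ = r)
    (hline : ¬ ∃ (q e : ℂ), e ≠ 0 ∧ ∀ a ∈ Λ, ∃ t : ℝ, a = q + (t : ℂ) * e) :
    ∀ ω ω' : ℂ, ω ∉ Λ → ω' ∉ Λ → ω ≠ ω' →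
      (∃ a ∈ Λ, ∃ b ∈ Λ,
        ‖(a - ω) * (b - ω')‖ ≠ ‖(a - ω') * (b - ω)‖) ∧
      0 < hilbertDC Λ ω ω' := by
  intro ω ω' hω hω' hωω'
  have hsubω : ∀ a ∈ Λ, a - ω ≠ 0 := fun a ha h =>
    hω (by rwa [sub_eq_zero.mp h] at ha)
  have hsubω' : ∀ a ∈ Λ, a - ω' ≠ 0 := fun a ha h =>
    hω' (by rwa [sub_eq_zero.mp h] at ha)
  obtain ⟨a₀, ha₀⟩ := hΛne
  -- Part 1
  have key : ∃ a ∈ Λ, ∃ b ∈ Λ,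
      ‖(a - ω) * (b - ω')‖ ≠ ‖(a - ω') * (b - ω)‖ := by
    by_contra hcon
    push_neg at hcon
    set k : ℝ := ‖a₀ - ω‖ / ‖a₀ - ω'‖ with hkdef
    have hpos0 : 0 < ‖a₀ - ω‖ := norm_pos_iff.mpr (hsubω a₀ ha₀)
    have hpos0' : 0 < ‖a₀ - ω'‖ := norm_pos_iff.mpr (hsubω' a₀ ha₀)
    have hkpos : 0 < k := div_pos hpos0 hpos0'
    have hk : ∀ a ∈ Λ, ‖a - ω‖ = k * ‖a - ω'‖ := by
      intro a ha
      have h := hcon a ha a₀ ha₀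
      rw [norm_mul, norm_mul] at h
      rw [hkdef]
      field_simp
      linarith [h]
    clear_value k
    by_cases hk1 : k = 1
    · -- line case
      apply hline
      refine ⟨(ω + ω')/2, Complex.I * (ω' - ω), ?_, ?_⟩
      · simp [sub_eq_zero, Ne.symm hωω', Complex.I_ne_zero]
      · intro a ha
        have habs := hk a ha
        rw [hk1, one_mul] at habs
        have hn : Complex.normSq (a - ω) = Complex.normSq (a - ω') := by
          rw [← Complex.sq_norm, ← Complex.sq_norm, habs]
        have he : Complex.I * (ω' - ω) ≠ 0 := by
          simp [sub_eq_zero, Ne.symm hωω', Complex.I_ne_zero]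
        have := real_mult (a - (ω + ω')/2) (Complex.I * (ω' - ω)) he
          (im_zero_of_normSq_eq a ω ω' hn)
        exact ⟨_, by linear_combination this⟩
    · -- circle case
      apply hcircle
      have hk2 : (1 : ℝ) - k^2 ≠ 0 := by
        intro h
        have : k^2 = 1 := by linarith
        have : k = 1 := by nlinarith
        exact hk1 this
      have hu : (((1 - k^2 : ℝ)) : ℂ) ≠ 0 := by exact_mod_cast hk2
      refine ⟨(ω - ((k^2:ℝ):ℂ) * ω') / (((1 - k^2 : ℝ)):ℂ),
        k * ‖ω - ω'‖ / |1 - k^2|, ?_, ?_⟩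
      · apply div_pos (mul_pos hkpos (norm_pos_iff.mpr (sub_ne_zero.mpr hωω')))
        exact abs_pos.mpr hk2
      · intro a ha
        have hn : Complex.normSq (a - ω) = k^2 * Complex.normSq (a - ω') := by
          rw [← Complex.sq_norm, ← Complex.sq_norm, hk a ha]; ring
        have hns := normSq_circle a ω ω' k hn
        have hrw : a - (ω - ((k^2:ℝ):ℂ) * ω') / (((1 - k^2 : ℝ)):ℂ)
            = ((((1 - k^2 : ℝ)):ℂ) * a - ω + ((k^2 : ℝ):ℂ) * ω') / (((1 - k^2 : ℝ)):ℂ) := by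
          rw [eq_div_iff hu, sub_mul, div_mul_cancel₀ _ hu]
          push_cast
          ring
        rw [hrw, norm_div, Complex.norm_real, Real.norm_eq_abs]
        congr 1
        have h1 : ‖(((1 - k^2 : ℝ)):ℂ) * a - ω + ((k^2 : ℝ):ℂ) * ω'‖
            = Real.sqrt (k^2 * Complex.normSq (ω - ω')) := by
          rw [Complex.norm_def, hns]
        rw [h1, Real.sqrt_mul (sq_nonneg k), Real.sqrt_sq hkpos.le, ← Complex.norm_def]
  refine ⟨key, ?_⟩
  -- Part 2
  set S := {r : ℝ | ∃ a ∈ Λ, ∃ b ∈ Λ,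
    r = ‖(a - ω) * (b - ω')‖ / ‖(a - ω') * (b - ω)‖} with hS
  have hSbdd : BddAbove S := by
    have hSim : S = (fun p : ℂ × ℂ =>
        ‖(p.1 - ω) * (p.2 - ω')‖ / ‖(p.1 - ω') * (p.2 - ω)‖)
        '' (Λ ×ˢ Λ) := by
      ext r
      constructor
      · rintro ⟨a, ha, b, hb, rfl⟩
        exact ⟨(a, b), ⟨ha, hb⟩, rfl⟩
      · rintro ⟨⟨a, b⟩, ⟨ha, hb⟩, rfl⟩
        exact ⟨a, ha, b, hb, rfl⟩
    rw [hSim]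
    apply ((hΛc.prod hΛc).image_of_continuousOn ?_).bddAbove
    apply ContinuousOn.div
    · exact (continuous_norm.comp ((continuous_fst.sub continuous_const).mul
        (continuous_snd.sub continuous_const))).continuousOn
    · exact (continuous_norm.comp ((continuous_fst.sub continuous_const).mul
        (continuous_snd.sub continuous_const))).continuousOn
    · rintro ⟨a, b⟩ ⟨ha, hb⟩
      simp only
      exact norm_ne_zero_iff.mpr (mul_ne_zero (hsubω' a ha) (hsubω b hb))
  obtain ⟨a, ha, b, hb, hne⟩ := key
  have hD : 0 < ‖(a - ω') * (b - ω)‖ :=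
    norm_pos_iff.mpr (mul_ne_zero (hsubω' a ha) (hsubω b hb))
  have hN : 0 < ‖(a - ω) * (b - ω')‖ :=
    norm_pos_iff.mpr (mul_ne_zero (hsubω a ha) (hsubω' b hb))
  have hgt : ∃ r ∈ S, 1 < r := by
    rcases lt_or_gt_of_ne hne with h | h
    · -- N < D, use swapped pair
      refine ⟨‖(b - ω) * (a - ω')‖ / ‖(b - ω') * (a - ω)‖,
        ⟨b, hb, a, ha, rfl⟩, ?_⟩
      rw [one_lt_div (by rw [mul_comm]; exact hN)]
      rw [mul_comm (b - ω), mul_comm (b - ω')]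
      exact h
    · refine ⟨‖(a - ω) * (b - ω')‖ / ‖(a - ω') * (b - ω)‖,
        ⟨a, ha, b, hb, rfl⟩, ?_⟩
      rw [one_lt_div hD]
      exact h
  obtain ⟨r, hrS, hr1⟩ := hgt
  have : 1 < sSup S := lt_of_lt_of_le hr1 (le_csSup hSbdd hrS)
  exact Real.log_pos this
end

section
/- Let E be a nonzero finite-dimensional complex normed vector space, Λ a nonempty compact set of continuous linear functionals on E, and ω ∈ E a nonzero vector with φ(ω) ≠ 0 for every φ ∈ Λ. Let v ∈ E. Then the function t ↦ d_Λ(ω, ω + t·v), which is defined for all sufficiently small t ≥ 0, has right derivative at t = 0 equal to sSup { Re( φ'(v)/φ'(ω) − φ(v)/φ(ω) ) : φ, φ' ∈ Λ }; i.e. it satisfies HasDerivWithinAt with this value on Set.Ici 0 at 0. -/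
section AuxHilbert

variable {E : Type*} [NormedAddCommGroup E] [NormedSpace ℂ E]

/-- Auxiliary log-abs function. -/
noncomputable def auxL (z : ℂ) : ℝ := Real.log (‖z‖)

/-- Auxiliary function: log of the cross-ratio-like quantity. -/
noncomputable def auxG (ω v : E) (p : (E →L[ℂ] ℂ) × (E →L[ℂ] ℂ)) (t : ℝ) : ℝ :=
  auxL (p.1 ω) + auxL (p.2 (ω + (t : ℂ) • v)) - auxL (p.1 (ω + (t : ℂ) • v)) - auxL (p.2 ω)

/-- Auxiliary function: the target derivative integrand. -/
noncomputable def auxD (ω v : E) (p : (E →L[ℂ] ℂ) × (E →L[ℂ] ℂ)) : ℝ :=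
  (p.2 v / p.2 ω - p.1 v / p.1 ω).re

/-- Auxiliary derivative of `auxG` in `t`. -/
noncomputable def auxG' (ω v : E) (p : (E →L[ℂ] ℂ) × (E →L[ℂ] ℂ)) (s : ℝ) : ℝ :=
  (p.2 v / (p.2 ω + (s : ℂ) * p.2 v)).re - (p.1 v / (p.1 ω + (s : ℂ) * p.1 v)).re

lemma hasDerivAt_logAbs (a b : ℂ) (t : ℝ) (h : a + (t : ℂ) * b ≠ 0) :
    HasDerivAt (fun s : ℝ => Real.log (‖(a + (s : ℂ) * b)‖))
      ((b / (a + (t : ℂ) * b)).re) t := by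
  have hre : HasDerivAt (fun s : ℝ => a.re + s * b.re) b.re t := by
    simpa using (hasDerivAt_mul_const b.re).const_add a.re
  have him : HasDerivAt (fun s : ℝ => a.im + s * b.im) b.im t := by
    simpa using (hasDerivAt_mul_const b.im).const_add a.im
  have hN : HasDerivAt (fun s : ℝ => Complex.normSq (a + (s : ℂ) * b))
      (b.re * (a.re + t * b.re) + (a.re + t * b.re) * b.re +
        (b.im * (a.im + t * b.im) + (a.im + t * b.im) * b.im)) t := by
    have h' := (hre.mul hre).add (him.mul him)
    refine h'.congr_of_eventuallyEq (Filter.Eventually.of_forall fun s => ?_)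
    simp [Complex.normSq_apply]
  have hNz : Complex.normSq (a + (t : ℂ) * b) ≠ 0 := by
    simpa [Complex.normSq_eq_zero] using h
  have hlog := hN.log hNz
  have hfun : (fun s : ℝ => Real.log (‖(a + (s : ℂ) * b)‖))
      = fun s : ℝ => Real.log (Complex.normSq (a + (s : ℂ) * b)) / 2 := by
    funext s
    rw [Complex.norm_def, Real.log_sqrt (Complex.normSq_nonneg _)]
  rw [hfun]
  refine (hlog.div_const 2).congr_deriv ?_
  rw [Complex.div_re]
  have h1 : (a + (t : ℂ) * b).re = a.re + t * b.re := by simp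
  have h2 : (a + (t : ℂ) * b).im = a.im + t * b.im := by simp
  rw [h1, h2]
  field_simp
  ring

lemma auxG_hasDerivAt (ω v : E) (p : (E →L[ℂ] ℂ) × (E →L[ℂ] ℂ)) (s : ℝ)
    (h2 : p.2 ω + (s : ℂ) * p.2 v ≠ 0) (h1 : p.1 ω + (s : ℂ) * p.1 v ≠ 0) :
    HasDerivAt (auxG ω v p) (auxG' ω v p s) s := by
  have e2 := hasDerivAt_logAbs (p.2 ω) (p.2 v) s h2
  have e1 := hasDerivAt_logAbs (p.1 ω) (p.1 v) s h1
  have hcomb := (((e2.const_add (auxL (p.1 ω))).sub e1).sub_const (auxL (p.2 ω)))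
  have hfun : auxG ω v p = fun u : ℝ =>
      (auxL (p.1 ω) + Real.log (‖(p.2 ω + (u : ℂ) * p.2 v)‖)
        - Real.log (‖(p.1 ω + (u : ℂ) * p.1 v)‖)) - auxL (p.2 ω) := by
    funext u
    simp [auxG, auxL, map_add, map_smul, smul_eq_mul]
  rw [hfun]
  exact hcomb

lemma term_bound (a b : ℂ) (s Cv mm : ℝ) (hs : 0 ≤ s) (hm : 0 < mm)
    (ha : mm ≤ ‖a‖) (ha' : mm / 2 ≤ ‖(a + (s : ℂ) * b)‖)
    (hb : ‖b‖ ≤ Cv) :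
    |(b / (a + (s : ℂ) * b)).re - (b / a).re| ≤ 2 * Cv ^ 2 / mm ^ 2 * s := by
  have ha0 : a ≠ 0 := by
    intro h0
    rw [h0] at ha; simp at ha; linarith
  have ha'0 : a + (s : ℂ) * b ≠ 0 := by
    intro h0
    rw [h0] at ha'; simp at ha'; linarith
  have hdiff : b / (a + (s : ℂ) * b) - b / a = -((s : ℂ) * b * b) / ((a + (s : ℂ) * b) * a) := by
    rw [div_sub_div _ _ ha'0 ha0]
    congr 1
    ring
  have habs : ‖(b / (a + (s : ℂ) * b) - b / a)‖
      = s * (‖b‖ * ‖b‖) / (‖(a + (s : ℂ) * b)‖ * ‖a‖) := by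
    rw [hdiff, norm_div, norm_neg, norm_mul, norm_mul, norm_mul, Complex.norm_real, Real.norm_eq_abs,
      abs_of_nonneg hs]
    ring
  have hstep : ‖(b / (a + (s : ℂ) * b) - b / a)‖
      ≤ s * (Cv * Cv) / ((mm / 2) * mm) := by
    rw [habs]
    have hb0 : 0 ≤ ‖b‖ := norm_nonneg _
    have hCv0 : 0 ≤ Cv := hb0.trans hb
    refine div_le_div₀ (by positivity) ?_ (by positivity) ?_
    · exact mul_le_mul_of_nonneg_left (mul_le_mul hb hb hb0 hCv0) hs
    · exact mul_le_mul ha' ha hm.le (norm_nonneg _)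
  calc |(b / (a + (s : ℂ) * b)).re - (b / a).re|
      = |(b / (a + (s : ℂ) * b) - b / a).re| := by rw [Complex.sub_re]
    _ ≤ ‖(b / (a + (s : ℂ) * b) - b / a)‖ := Complex.abs_re_le_norm _
    _ ≤ s * (Cv * Cv) / ((mm / 2) * mm) := hstep
    _ = 2 * Cv ^ 2 / mm ^ 2 * s := by
        field_simp

end AuxHilbert

theorem hilbertD_right_deriv_finsler
    {E : Type*} [NormedAddCommGroup E] [NormedSpace ℂ E] [Nontrivial E]
    [FiniteDimensional ℂ E]
    (Λ : Set (E →L[ℂ] ℂ)) (hΛc : IsCompact Λ) (hΛne : Λ.Nonempty)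
    (ω : E) (hω : ω ≠ 0) (h1 : ∀ φ ∈ Λ, φ ω ≠ 0) (v : E) :
    HasDerivWithinAt (fun t : ℝ => hilbertD Λ ω (ω + (t : ℂ) • v))
      (sSup {r : ℝ | ∃ φ ∈ Λ, ∃ φ' ∈ Λ,
        r = (φ' v / φ' ω - φ v / φ ω).re})
      (Set.Ici 0) 0 := by
  classical
  set K : Set ((E →L[ℂ] ℂ) × (E →L[ℂ] ℂ)) := Λ ×ˢ Λ with hKdef
  have hKne : K.Nonempty := hΛne.prod hΛne
  -- bound on the functionals
  obtain ⟨C, hC⟩ := hΛc.isBounded.exists_norm_le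
  set Cv : ℝ := C * ‖v‖ + 1 with hCvdef
  have hCv : ∀ φ ∈ Λ, ‖(φ v)‖ ≤ Cv := by
    intro φ hφ
    have h' : ‖φ v‖ ≤ ‖φ‖ * ‖v‖ := φ.le_opNorm v
    have h'' : ‖φ‖ * ‖v‖ ≤ C * ‖v‖ := mul_le_mul_of_nonneg_right (hC φ hφ) (norm_nonneg v)
    simp only [hCvdef]
    linarith
  have hCvpos : 0 < Cv := by
    obtain ⟨φ₀, hφ₀⟩ := hΛne
    have hC0 := (norm_nonneg φ₀).trans (hC φ₀ hφ₀)
    have := norm_nonneg v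
    simp only [hCvdef]
    nlinarith
  -- min of |φ ω| over Λ
  have hcontA : ContinuousOn (fun φ : E →L[ℂ] ℂ => ‖(φ ω)‖) Λ :=
    (continuous_norm.comp (continuous_id.clm_apply continuous_const)).continuousOn
  obtain ⟨φmin, hφminΛ, hφmin⟩ := hΛc.exists_isMinOn hΛne hcontA
  set m : ℝ := ‖(φmin ω)‖ with hmdef
  have hm : 0 < m := norm_pos_iff.mpr (h1 φmin hφminΛ)
  have hmle : ∀ φ ∈ Λ, m ≤ ‖(φ ω)‖ := fun φ hφ => hφmin hφ
  set δ : ℝ := m / (2 * Cv) with hδdef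
  have hδpos : 0 < δ := div_pos hm (by linarith)
  have hCvne : Cv ≠ 0 := ne_of_gt hCvpos
  have hδCv : δ * Cv = m / 2 := by
    rw [hδdef]; field_simp
  -- lower bound on |φ(ω) + s φ(v)|
  have hlow : ∀ φ ∈ Λ, ∀ s : ℝ, 0 ≤ s → s ≤ δ → m / 2 ≤ ‖(φ ω + (s : ℂ) * φ v)‖ := by
    intro φ hφ s hs hsδ
    have habs : ‖((s : ℂ) * φ v)‖ = s * ‖(φ v)‖ := by
      rw [norm_mul, Complex.norm_real, Real.norm_eq_abs, abs_of_nonneg hs]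
    have h₁ : ‖(φ ω)‖ ≤ ‖(φ ω + (s : ℂ) * φ v)‖
        + ‖((s : ℂ) * φ v)‖ := by
      have h' := norm_add_le (φ ω + (s : ℂ) * φ v) (-((s : ℂ) * φ v))
      rw [norm_neg] at h'
      simpa using h'
    have h₂ : s * ‖(φ v)‖ ≤ δ * Cv :=
      mul_le_mul hsδ (hCv φ hφ) (norm_nonneg _) hδpos.le
    have h₃ := hmle φ hφ
    rw [habs] at h₁
    rw [hδCv] at h₂
    linarith
  have hne0 : ∀ φ ∈ Λ, ∀ s : ℝ, 0 ≤ s → s ≤ δ → φ ω + (s : ℂ) * φ v ≠ 0 := by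
    intro φ hφ s hs hsδ h0
    have h' := hlow φ hφ s hs hsδ
    rw [h0] at h'
    simp at h'
    linarith
  set A : ℝ := 4 * Cv ^ 2 / m ^ 2 with hAdef
  have hA : 0 ≤ A := by positivity
  -- bound on the variation of the derivative
  have hG'bound : ∀ p ∈ K, ∀ s : ℝ, 0 ≤ s → s ≤ δ →
      |auxG' ω v p s - auxD ω v p| ≤ A * s := by
    intro p hp s hs hsδ
    have hp1 : p.1 ∈ Λ := hp.1
    have hp2 : p.2 ∈ Λ := hp.2
    have t2 := term_bound (p.2 ω) (p.2 v) s Cv m hs hm (hmle _ hp2)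
      (hlow _ hp2 s hs hsδ) (hCv _ hp2)
    have t1 := term_bound (p.1 ω) (p.1 v) s Cv m hs hm (hmle _ hp1)
      (hlow _ hp1 s hs hsδ) (hCv _ hp1)
    have hD0 : auxD ω v p = (p.2 v / p.2 ω).re - (p.1 v / p.1 ω).re := by
      simp [auxD, Complex.sub_re]
    rw [hD0]
    simp only [auxG']
    have heq : (p.2 v / (p.2 ω + (s : ℂ) * p.2 v)).re - (p.1 v / (p.1 ω + (s : ℂ) * p.1 v)).re
        - ((p.2 v / p.2 ω).re - (p.1 v / p.1 ω).re)
        = ((p.2 v / (p.2 ω + (s : ℂ) * p.2 v)).re - (p.2 v / p.2 ω).re)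
          - ((p.1 v / (p.1 ω + (s : ℂ) * p.1 v)).re - (p.1 v / p.1 ω).re) := by ring
    rw [heq]
    have habs := abs_sub ((p.2 v / (p.2 ω + (s : ℂ) * p.2 v)).re - (p.2 v / p.2 ω).re)
      ((p.1 v / (p.1 ω + (s : ℂ) * p.1 v)).re - (p.1 v / p.1 ω).re)
    have hAs : A * s = 2 * Cv ^ 2 / m ^ 2 * s + 2 * Cv ^ 2 / m ^ 2 * s := by
      rw [hAdef]; ring
    linarith
  have hGderiv : ∀ p ∈ K, ∀ s : ℝ, 0 ≤ s → s ≤ δ →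
      HasDerivAt (auxG ω v p) (auxG' ω v p s) s := by
    intro p hp s hs hsδ
    exact auxG_hasDerivAt ω v p s (hne0 _ hp.2 s hs hsδ) (hne0 _ hp.1 s hs hsδ)
  have hG0 : ∀ p : (E →L[ℂ] ℂ) × (E →L[ℂ] ℂ), auxG ω v p 0 = 0 := by
    intro p
    simp [auxG]
  have hD' : ∀ p : (E →L[ℂ] ℂ) × (E →L[ℂ] ℂ), auxD ω v p = auxG' ω v p 0 := by
    intro p
    simp [auxD, auxG', Complex.sub_re]
  -- quadratic estimate via MVT
  have hkey : ∀ p ∈ K, ∀ t : ℝ, 0 ≤ t → t ≤ δ →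
      |auxG ω v p t - t * auxD ω v p| ≤ A * t ^ 2 := by
    intro p hp t ht0 htδ
    have hF : ∀ s ∈ Set.Icc (0 : ℝ) t,
        HasDerivWithinAt (fun u => auxG ω v p u - u * auxD ω v p)
          (auxG' ω v p s - auxD ω v p) (Set.Icc 0 t) s := by
      intro s hs
      exact ((hGderiv p hp s hs.1 (hs.2.trans htδ)).sub
        (hasDerivAt_mul_const (auxD ω v p))).hasDerivWithinAt
    have hbound : ∀ s ∈ Set.Icc (0 : ℝ) t, ‖auxG' ω v p s - auxD ω v p‖ ≤ A * t := by
      intro s hs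
      rw [Real.norm_eq_abs]
      have h' := hG'bound p hp s hs.1 (hs.2.trans htδ)
      have h'' : A * s ≤ A * t := mul_le_mul_of_nonneg_left hs.2 hA
      linarith
    have hmvt := Convex.norm_image_sub_le_of_norm_hasDerivWithin_le hF hbound
      (convex_Icc 0 t) (Set.left_mem_Icc.mpr ht0) (Set.right_mem_Icc.mpr ht0)
    simp only [hG0 p, zero_mul, sub_zero, mul_zero, Real.norm_eq_abs, sub_zero] at hmvt
    have habs0 : A * t * |t| = A * t ^ 2 := by rw [abs_of_nonneg ht0]; ring
    linarith
  -- bound on auxD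
  have hDle : ∀ p ∈ K, |auxD ω v p| ≤ 2 * Cv / m := by
    intro p hp
    have hx : ‖(p.2 v / p.2 ω)‖ ≤ Cv / m := by
      rw [norm_div]
      exact div_le_div₀ hCvpos.le (hCv _ hp.2) hm (hmle _ hp.2)
    have hy : ‖(p.1 v / p.1 ω)‖ ≤ Cv / m := by
      rw [norm_div]
      exact div_le_div₀ hCvpos.le (hCv _ hp.1) hm (hmle _ hp.1)
    have hsub : ‖(p.2 v / p.2 ω - p.1 v / p.1 ω)‖
        ≤ ‖(p.2 v / p.2 ω)‖ + ‖(p.1 v / p.1 ω)‖ := by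
      have h' := norm_add_le (p.2 v / p.2 ω) (-(p.1 v / p.1 ω))
      rw [norm_neg] at h'
      simpa [sub_eq_add_neg] using h'
    have h' : |auxD ω v p| ≤ ‖(p.2 v / p.2 ω - p.1 v / p.1 ω)‖ :=
      Complex.abs_re_le_norm _
    have h'' : 2 * Cv / m = Cv / m + Cv / m := by ring
    linarith
  have hDbdd : BddAbove (auxD ω v '' K) := by
    refine ⟨2 * Cv / m, ?_⟩
    rintro r ⟨p, hp, rfl⟩
    exact (abs_le.mp (hDle p hp)).2
  set L : ℝ := sSup (auxD ω v '' K) with hLdef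
  set f : ℝ → ℝ := fun t => sSup ((fun p => auxG ω v p t) '' K) with hfdef
  have hf0 : f 0 = 0 := by
    have himg : (fun p => auxG ω v p 0) '' K = {0} := by
      rw [show (fun p : (E →L[ℂ] ℂ) × (E →L[ℂ] ℂ) => auxG ω v p 0) = fun _ => (0 : ℝ)
        from funext hG0]
      exact hKne.image_const 0
    rw [hfdef]
    simp only [himg, csSup_singleton]
  have hTbdd : ∀ t : ℝ, 0 ≤ t → t ≤ δ → BddAbove ((fun p => auxG ω v p t) '' K) := by
    intro t ht0 htδ
    refine ⟨t * L + A * t ^ 2, ?_⟩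
    rintro r ⟨p, hp, rfl⟩
    have h₁ := (abs_le.mp (hkey p hp t ht0 htδ)).2
    have h₂ : t * auxD ω v p ≤ t * L :=
      mul_le_mul_of_nonneg_left (le_csSup hDbdd ⟨p, hp, rfl⟩) ht0
    linarith
  have hquad : ∀ t : ℝ, 0 ≤ t → t ≤ δ → |f t - t * L| ≤ A * t ^ 2 := by
    intro t ht0 htδ
    rcases eq_or_lt_of_le ht0 with h0 | htpos
    · rw [← h0]
      simp [hf0]
    · have hup : f t ≤ t * L + A * t ^ 2 := by
        apply csSup_le (hKne.image _)
        rintro r ⟨p, hp, rfl⟩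
        have h₁ := (abs_le.mp (hkey p hp t ht0 htδ)).2
        have h₂ : t * auxD ω v p ≤ t * L :=
          mul_le_mul_of_nonneg_left (le_csSup hDbdd ⟨p, hp, rfl⟩) ht0
        linarith
      have hdown : t * L ≤ f t + A * t ^ 2 := by
        have hmap : t * L = sSup ((fun x => t * x) '' (auxD ω v '' K)) :=
          Monotone.map_csSup_of_continuousAt (continuous_const.mul continuous_id).continuousAt
            (monotone_mul_left_of_nonneg ht0) (hKne.image _) hDbdd
        rw [hmap]
        apply csSup_le ((hKne.image _).image _)
        rintro r ⟨r', ⟨p, hp, rfl⟩, rfl⟩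
        have h₁ := (abs_le.mp (hkey p hp t ht0 htδ)).1
        have h₂ : auxG ω v p t ≤ f t := le_csSup (hTbdd t ht0 htδ) ⟨p, hp, rfl⟩
        show t * auxD ω v p ≤ f t + A * t ^ 2
        linarith
      rw [abs_le]
      constructor <;> linarith
  -- eventual equality with hilbertD
  have heq : ∀ t : ℝ, 0 ≤ t → t ≤ δ → hilbertD Λ ω (ω + (t : ℂ) • v) = f t := by
    intro t ht0 htδ
    have hexp : ∀ p ∈ K, Real.exp (auxG ω v p t)
        = ‖(p.1 ω * p.2 (ω + (t : ℂ) • v))‖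
          / ‖(p.1 (ω + (t : ℂ) • v) * p.2 ω)‖ := by
      intro p hp
      have hφ1 : p.1 (ω + (t : ℂ) • v) = p.1 ω + (t : ℂ) * p.1 v := by
        simp [map_add, map_smul, smul_eq_mul]
      have hφ2 : p.2 (ω + (t : ℂ) • v) = p.2 ω + (t : ℂ) * p.2 v := by
        simp [map_add, map_smul, smul_eq_mul]
      have e1 : 0 < ‖(p.1 ω)‖ := norm_pos_iff.mpr (h1 _ hp.1)
      have e4 : 0 < ‖(p.2 ω)‖ := norm_pos_iff.mpr (h1 _ hp.2)
      have e2 : 0 < ‖(p.2 (ω + (t : ℂ) • v))‖ := by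
        rw [hφ2]; exact norm_pos_iff.mpr (hne0 _ hp.2 t ht0 htδ)
      have e3 : 0 < ‖(p.1 (ω + (t : ℂ) • v))‖ := by
        rw [hφ1]; exact norm_pos_iff.mpr (hne0 _ hp.1 t ht0 htδ)
      rw [norm_mul, norm_mul]
      simp only [auxG, auxL]
      rw [Real.exp_sub, Real.exp_sub, Real.exp_add, Real.exp_log e1, Real.exp_log e2,
        Real.exp_log e3, Real.exp_log e4, div_div]
    have hSet : {r : ℝ | ∃ φ ∈ Λ, ∃ φ' ∈ Λ,
        r = ‖(φ ω * φ' (ω + (t : ℂ) • v))‖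
          / ‖(φ (ω + (t : ℂ) • v) * φ' ω)‖}
        = Real.exp '' ((fun p => auxG ω v p t) '' K) := by
      ext r
      constructor
      · rintro ⟨φ, hφ, φ', hφ', rfl⟩
        exact ⟨auxG ω v (φ, φ') t, ⟨(φ, φ'), ⟨hφ, hφ'⟩, rfl⟩, (hexp (φ, φ') ⟨hφ, hφ'⟩).symm ▸ rfl⟩
      · rintro ⟨x, ⟨p, hp, rfl⟩, rfl⟩
        exact ⟨p.1, hp.1, p.2, hp.2, hexp p hp⟩
    rw [hilbertD, hSet,
      ← Monotone.map_csSup_of_continuousAt Real.continuous_exp.continuousAt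
        Real.exp_monotone (hKne.image _) (hTbdd t ht0 htδ), Real.log_exp]
  -- derivative of f
  have hfderiv : HasDerivWithinAt f L (Set.Ici 0) 0 := by
    rw [hasDerivWithinAt_iff_tendsto_slope, Set.Ici_sdiff_left, tendsto_iff_dist_tendsto_zero]
    apply squeeze_zero' (g := fun t => A * t)
    · exact Filter.Eventually.of_forall fun t => dist_nonneg
    · have hev1 : ∀ᶠ t in nhdsWithin (0 : ℝ) (Set.Ioi 0), t < δ :=
        (eventually_lt_nhds hδpos).filter_mono nhdsWithin_le_nhds
      have hev2 : ∀ᶠ t in nhdsWithin (0 : ℝ) (Set.Ioi 0), t ∈ Set.Ioi (0 : ℝ) :=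
        eventually_mem_nhdsWithin
      filter_upwards [hev1, hev2] with t htδ ht0'
      have ht0 : (0 : ℝ) < t := ht0'
      rw [Real.dist_eq]
      have hslope : slope f 0 t = f t / t := by
        rw [slope_def_field, hf0, sub_zero, sub_zero]
      rw [hslope]
      have hq := hquad t ht0.le htδ.le
      have hft : f t / t - L = (f t - t * L) / t := by
        field_simp
      rw [hft, abs_div, abs_of_pos ht0, div_le_iff₀ ht0]
      calc |f t - t * L| ≤ A * t ^ 2 := hq
        _ = A * t * t := by ring
    · have h' : Filter.Tendsto (fun t : ℝ => A * t) (nhds 0) (nhds (A * 0)) :=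
        (continuous_const.mul continuous_id).tendsto 0
      rw [mul_zero] at h'
      exact h'.mono_left nhdsWithin_le_nhds
  -- conclude
  have hsetD : {r : ℝ | ∃ φ ∈ Λ, ∃ φ' ∈ Λ, r = (φ' v / φ' ω - φ v / φ ω).re}
      = auxD ω v '' K := by
    ext r
    constructor
    · rintro ⟨φ, hφ, φ', hφ', rfl⟩
      exact ⟨(φ, φ'), ⟨hφ, hφ'⟩, rfl⟩
    · rintro ⟨p, hp, rfl⟩
      exact ⟨p.1, hp.1, p.2, hp.2, rfl⟩
  rw [hsetD, ← hLdef]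
  apply hfderiv.congr_of_eventuallyEq
  · have hev1 : ∀ᶠ t in nhdsWithin (0 : ℝ) (Set.Ici 0), t < δ :=
      (eventually_lt_nhds hδpos).filter_mono nhdsWithin_le_nhds
    have hev2 : ∀ᶠ t in nhdsWithin (0 : ℝ) (Set.Ici 0), t ∈ Set.Ici (0 : ℝ) :=
      eventually_mem_nhdsWithin
    filter_upwards [hev1, hev2] with t h1t h2t
    exact heq t h2t h1t.le
  · exact heq 0 le_rfl hδpos.le
end

section
/- Let E be a nonzero finite-dimensional complex normed vector space, Λ a nonempty compact set of continuous linear functionals on E, and ω ∈ E a nonzero vector with φ(ω) ≠ 0 for every φ ∈ Λ. Define N(v) = sSup { Re( φ'(v)/φ'(ω) − φ(v)/φ(ω) ) : φ, φ' ∈ Λ } for v ∈ E. Then: (i) N(v) ≥ 0 for all v; (ii) N(r·v) = |r|·N(v) for all r ∈ ℝ and v ∈ E (in particular N(−v) = N(v)); (iii) N(v + w) ≤ N(v) + N(w) for all v, w. Moreover, if Λ separates every pair of points — i.e. for all nonzero x, y ∈ E with φ(x) ≠ 0 and φ(y) ≠ 0 for every φ ∈ Λ and with y not a complex scalar multiple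 of x, there exist φ, φ' ∈ Λ such that |φ(x)·φ'(y)| ≠ |φ(y)·φ'(x)| — then N(v) > 0 for every v ∈ E that is not a complex scalar multiple of ω. Hence N is a symmetric (real) norm on any complex hyperplane of E transverse to ℂ·ω. -/
theorem finsler_norm_properties
    {E : Type*} [NormedAddCommGroup E] [NormedSpace ℂ E] [Nontrivial E]
    [FiniteDimensional ℂ E]
    (Λ : Set (E →L[ℂ] ℂ)) (hΛc : IsCompact Λ) (hΛne : Λ.Nonempty)
    (ω : E) (hω : ω ≠ 0) (h1 : ∀ φ ∈ Λ, φ ω ≠ 0)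
    (N : E → ℝ)
    (hN : ∀ v : E, N v = sSup {r : ℝ | ∃ φ ∈ Λ, ∃ φ' ∈ Λ,
      r = (φ' v / φ' ω - φ v / φ ω).re}) :
    (∀ v : E, 0 ≤ N v) ∧
    (∀ (r : ℝ) (v : E), N ((r : ℂ) • v) = |r| * N v) ∧
    (∀ v w : E, N (v + w) ≤ N v + N w) ∧
    ((∀ x y : E, x ≠ 0 → y ≠ 0 → (∀ φ ∈ Λ, φ x ≠ 0) → (∀ φ ∈ Λ, φ y ≠ 0) →
        (¬ ∃ c : ℂ, y = c • x) →
        ∃ φ ∈ Λ, ∃ φ' ∈ Λ,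
          ‖φ x * φ' y‖ ≠ ‖φ y * φ' x‖) →
      ∀ v : E, (¬ ∃ c : ℂ, v = c • ω) → 0 < N v) := by
  classical
  set S : E → Set ℝ := fun v => {r : ℝ | ∃ φ ∈ Λ, ∃ φ' ∈ Λ,
      r = (φ' v / φ' ω - φ v / φ ω).re} with hSdef
  have hNS : ∀ v : E, N v = sSup (S v) := hN
  obtain ⟨φ₀, hφ₀⟩ := hΛne
  have hmem0 : ∀ v : E, (0 : ℝ) ∈ S v := by
    intro v
    exact ⟨φ₀, hφ₀, φ₀, hφ₀, by simp⟩
  have hSne : ∀ v : E, (S v).Nonempty := fun v => ⟨0, hmem0 v⟩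
  -- boundedness via compactness
  have hbdd : ∀ v : E, BddAbove (S v) := by
    intro v
    have hcΛ : ∀ w : E, ContinuousOn (fun φ : E →L[ℂ] ℂ => φ w) Λ :=
      fun w => ((ContinuousLinearMap.apply ℂ ℂ w).continuous).continuousOn
    have hcont : ContinuousOn (fun p : (E →L[ℂ] ℂ) × (E →L[ℂ] ℂ) =>
        ((p.2 v) / (p.2 ω) - (p.1 v) / (p.1 ω)).re) (Λ ×ˢ Λ) := by
      apply Complex.continuous_re.comp_continuousOn
      apply ContinuousOn.sub
      · apply ContinuousOn.div
        · exact ((ContinuousLinearMap.apply ℂ ℂ v).continuous.comp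
            continuous_snd).continuousOn
        · exact ((ContinuousLinearMap.apply ℂ ℂ ω).continuous.comp
            continuous_snd).continuousOn
        · rintro ⟨φ, φ'⟩ ⟨-, hφ'⟩; exact h1 φ' hφ'
      · apply ContinuousOn.div
        · exact ((ContinuousLinearMap.apply ℂ ℂ v).continuous.comp
            continuous_fst).continuousOn
        · exact ((ContinuousLinearMap.apply ℂ ℂ ω).continuous.comp
            continuous_fst).continuousOn
        · rintro ⟨φ, φ'⟩ ⟨hφ, -⟩; exact h1 φ hφ
    have himg : S v = (fun p : (E →L[ℂ] ℂ) × (E →L[ℂ] ℂ) =>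
        ((p.2 v) / (p.2 ω) - (p.1 v) / (p.1 ω)).re) '' (Λ ×ˢ Λ) := by
      ext r
      constructor
      · rintro ⟨φ, hφ, φ', hφ', rfl⟩
        exact ⟨(φ, φ'), ⟨hφ, hφ'⟩, rfl⟩
      · rintro ⟨⟨φ, φ'⟩, ⟨hφ, hφ'⟩, rfl⟩
        exact ⟨φ, hφ, φ', hφ', rfl⟩
    rw [himg]
    exact ((hΛc.prod hΛc).image_of_continuousOn hcont).bddAbove
  -- (i) nonnegativity
  have hnonneg : ∀ v : E, 0 ≤ N v := by
    intro v
    rw [hNS v]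
    exact le_csSup (hbdd v) (hmem0 v)
  -- S is symmetric : S (-v) = S v
  have hSneg_sub : ∀ v : E, S (-v) ⊆ S v := by
    intro v r hr
    obtain ⟨φ, hφ, φ', hφ', rfl⟩ := hr
    refine ⟨φ', hφ', φ, hφ, ?_⟩
    have : φ' (-v) / φ' ω - φ (-v) / φ ω = -(φ' v / φ' ω - φ v / φ ω) := by
      simp [map_neg, neg_div]; ring
    rw [this, Complex.neg_re, Complex.sub_re, Complex.sub_re]
    ring
  have hSneg : ∀ v : E, S (-v) = S v := by
    intro v
    refine Set.Subset.antisymm (hSneg_sub v) ?_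
    have := hSneg_sub (-v)
    rwa [neg_neg] at this
  have hNneg : ∀ v : E, N (-v) = N v := by
    intro v; rw [hNS, hNS, hSneg]
  -- scaling of set elements
  have hsmul_mem : ∀ (r : ℝ) (v : E) (t : ℝ), t ∈ S v → r * t ∈ S ((r : ℂ) • v) := by
    rintro r v t ⟨φ, hφ, φ', hφ', rfl⟩
    refine ⟨φ, hφ, φ', hφ', ?_⟩
    have : φ' ((r : ℂ) • v) / φ' ω - φ ((r : ℂ) • v) / φ ω
        = (r : ℂ) * (φ' v / φ' ω - φ v / φ ω) := by
      simp [map_smul, smul_eq_mul]; ring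
    rw [this, Complex.re_ofReal_mul]
  -- homogeneity for nonnegative scalars
  have hscale : ∀ (r : ℝ), 0 ≤ r → ∀ v : E, N ((r : ℂ) • v) = r * N v := by
    intro r hr v
    rcases eq_or_lt_of_le hr with h0 | hpos
    · -- r = 0
      rw [← h0]
      simp only [zero_mul]
      refine le_antisymm ?_ (by rw [← h0] at *; exact hnonneg _)
      rw [hNS]
      apply csSup_le (hSne _)
      rintro t ⟨φ, hφ, φ', hφ', rfl⟩
      simp [← h0]
    · apply le_antisymm
      · rw [hNS ((r : ℂ) • v)]
        apply csSup_le (hSne _)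
        rintro t ht
        obtain ⟨φ, hφ, φ', hφ', rfl⟩ := ht
        have hmem : (φ' v / φ' ω - φ v / φ ω).re ∈ S v := ⟨φ, hφ, φ', hφ', rfl⟩
        have h1' : (φ' v / φ' ω - φ v / φ ω).re ≤ N v := by
          rw [hNS v]; exact le_csSup (hbdd v) hmem
        have heq : φ' ((r : ℂ) • v) / φ' ω - φ ((r : ℂ) • v) / φ ω
            = (r : ℂ) * (φ' v / φ' ω - φ v / φ ω) := by
          simp [map_smul, smul_eq_mul]; ring
        rw [heq, Complex.re_ofReal_mul]
        exact mul_le_mul_of_nonneg_left h1' hr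
      · rw [mul_comm, ← le_div_iff₀ hpos, hNS v]
        apply csSup_le (hSne v)
        intro t ht
        rw [le_div_iff₀ hpos, mul_comm]
        have := hsmul_mem r v t ht
        rw [hNS]
        exact le_csSup (hbdd _) this
  have hhom : ∀ (r : ℝ) (v : E), N ((r : ℂ) • v) = |r| * N v := by
    intro r v
    rcases le_or_gt 0 r with hr | hr
    · rw [abs_of_nonneg hr]; exact hscale r hr v
    · have : ((r : ℂ)) • v = ((-r : ℝ) : ℂ) • (-v) := by
        push_cast; rw [smul_neg, neg_smul, neg_neg]
      rw [this, hscale (-r) (by linarith) (-v), hNneg, abs_of_neg hr]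
  -- subadditivity
  have hsub : ∀ v w : E, N (v + w) ≤ N v + N w := by
    intro v w
    rw [hNS (v + w)]
    apply csSup_le (hSne _)
    rintro t ⟨φ, hφ, φ', hφ', rfl⟩
    have heq : φ' (v + w) / φ' ω - φ (v + w) / φ ω
        = (φ' v / φ' ω - φ v / φ ω) + (φ' w / φ' ω - φ w / φ ω) := by
      simp [map_add]; ring
    rw [heq, Complex.add_re]
    have h1' : (φ' v / φ' ω - φ v / φ ω).re ≤ N v := by
      rw [hNS v]; exact le_csSup (hbdd v) ⟨φ, hφ, φ', hφ', rfl⟩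
    have h2' : (φ' w / φ' ω - φ w / φ ω).re ≤ N w := by
      rw [hNS w]; exact le_csSup (hbdd w) ⟨φ, hφ, φ', hφ', rfl⟩
    linarith
  refine ⟨hnonneg, hhom, hsub, ?_⟩
  -- positivity
  intro hsep v hv
  by_contra hle
  push_neg at hle
  have hRe : ∀ φ ∈ Λ, ∀ φ' ∈ Λ, (φ' v / φ' ω - φ v / φ ω).re = 0 := by
    intro φ hφ φ' hφ'
    have hA : (φ' v / φ' ω - φ v / φ ω).re ≤ 0 := by
      calc (φ' v / φ' ω - φ v / φ ω).re ≤ N v := by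
            rw [hNS v]; exact le_csSup (hbdd v) ⟨φ, hφ, φ', hφ', rfl⟩
        _ ≤ 0 := hle
    have hB : (φ v / φ ω - φ' v / φ' ω).re ≤ 0 := by
      calc (φ v / φ ω - φ' v / φ' ω).re ≤ N v := by
            rw [hNS v]; exact le_csSup (hbdd v) ⟨φ', hφ', φ, hφ, rfl⟩
        _ ≤ 0 := hle
    have : (φ v / φ ω - φ' v / φ' ω).re = -((φ' v / φ' ω - φ v / φ ω).re) := by
      rw [Complex.sub_re, Complex.sub_re]; ring
    linarith [this ▸ hB]
  set c : ℝ := (φ₀ v / φ₀ ω).re with hcdef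
  set u : E := v - (c : ℂ) • ω with hudef
  have hu : ∀ φ ∈ Λ, (φ u / φ ω).re = 0 := by
    intro φ hφ
    have hφω := h1 φ hφ
    have heq : φ u / φ ω = φ v / φ ω - (c : ℂ) := by
      rw [hudef, map_sub, map_smul, smul_eq_mul, sub_div, mul_div_assoc,
        div_self hφω, mul_one]
    rw [heq, Complex.sub_re, Complex.ofReal_re]
    have := hRe φ₀ hφ₀ φ hφ
    rw [Complex.sub_re] at this
    linarith
  set x : E := u + ω with hxdef
  set y : E := u - ω with hydef
  have hratx : ∀ φ ∈ Λ, φ x = φ ω * (φ u / φ ω + 1) := by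
    intro φ hφ
    have hφω := h1 φ hφ
    rw [hxdef, map_add, mul_add, mul_one, mul_div_cancel₀ _ hφω]
  have hraty : ∀ φ ∈ Λ, φ y = φ ω * (φ u / φ ω - 1) := by
    intro φ hφ
    have hφω := h1 φ hφ
    rw [hydef, map_sub, mul_sub, mul_one, mul_div_cancel₀ _ hφω]
  have hxne : x ≠ 0 := by
    intro h
    have := hratx φ₀ hφ₀
    rw [h, map_zero] at this
    have h0 : φ₀ u / φ₀ ω + 1 = 0 := by
      rcases mul_eq_zero.mp this.symm with h' | h'
      · exact absurd h' (h1 φ₀ hφ₀)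
      · exact h'
    have := hu φ₀ hφ₀
    have : (φ₀ u / φ₀ ω + 1).re = 1 := by
      rw [Complex.add_re, Complex.one_re, this]; ring
    rw [h0] at this
    simp at this
  have hyne : y ≠ 0 := by
    intro h
    have := hraty φ₀ hφ₀
    rw [h, map_zero] at this
    have h0 : φ₀ u / φ₀ ω - 1 = 0 := by
      rcases mul_eq_zero.mp this.symm with h' | h'
      · exact absurd h' (h1 φ₀ hφ₀)
      · exact h'
    have := hu φ₀ hφ₀
    have : (φ₀ u / φ₀ ω - 1).re = -1 := by
      rw [Complex.sub_re, Complex.one_re, this]; ring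
    rw [h0] at this
    simp at this
  have hφx : ∀ φ ∈ Λ, φ x ≠ 0 := by
    intro φ hφ h
    rw [hratx φ hφ] at h
    rcases mul_eq_zero.mp h with h' | h'
    · exact h1 φ hφ h'
    · have := hu φ hφ
      have h2 : (φ u / φ ω + 1).re = 1 := by
        rw [Complex.add_re, Complex.one_re, this]; ring
      rw [h'] at h2
      simp at h2
  have hφy : ∀ φ ∈ Λ, φ y ≠ 0 := by
    intro φ hφ h
    rw [hraty φ hφ] at h
    rcases mul_eq_zero.mp h with h' | h'
    · exact h1 φ hφ h'
    · have := hu φ hφ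
      have h2 : (φ u / φ ω - 1).re = -1 := by
        rw [Complex.sub_re, Complex.one_re, this]; ring
      rw [h'] at h2
      simp at h2
  have hnmul : ¬ ∃ c' : ℂ, y = c' • x := by
    rintro ⟨c', hc'⟩
    have h : u - ω = c' • u + c' • ω := by rw [← smul_add, ← hxdef, ← hc', hydef]
    have h' : u = c' • u + c' • ω + ω := sub_eq_iff_eq_add.mp h
    have key : (1 - c') • u = (1 + c') • ω := by
      rw [sub_smul, add_smul, one_smul, one_smul]
      nth_rewrite 1 [h']
      abel
    by_cases hc1 : c' = 1
    · rw [hc1, sub_self, zero_smul] at key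
      have : (1 + 1 : ℂ) ≠ 0 := by norm_num
      exact hω (by
        have := key.symm
        rw [smul_eq_zero] at this
        tauto)
    · have hne : (1 - c') ≠ 0 := by
        intro h0
        apply hc1
        have : (1 : ℂ) = c' := by linear_combination h0
        exact this.symm
      have hu' : u = ((1 - c')⁻¹ * (1 + c')) • ω := by
        have := congrArg (fun z => (1 - c')⁻¹ • z) key
        simpa [smul_smul, inv_mul_cancel₀ hne] using this
      apply hv
      refine ⟨(1 - c')⁻¹ * (1 + c') + c, ?_⟩
      have : v = u + (c : ℂ) • ω := by rw [hudef]; abel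
      rw [this, hu', ← add_smul]
  obtain ⟨φ, hφ, φ', hφ', hne⟩ := hsep x y hxne hyne hφx hφy hnmul
  apply hne
  have habs : ∀ ψ ∈ Λ, ‖ψ x‖ = ‖ψ y‖ := by
    intro ψ hψ
    rw [hratx ψ hψ, hraty ψ hψ, norm_mul, norm_mul]
    congr 1
    have hw := hu ψ hψ
    set z : ℂ := ψ u / ψ ω
    rw [Complex.norm_def, Complex.norm_def, Complex.normSq_apply, Complex.normSq_apply]
    rw [Complex.add_re, Complex.sub_re, Complex.add_im, Complex.sub_im,
      Complex.one_re, Complex.one_im, hw]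
    ring_nf
  rw [norm_mul, norm_mul, habs φ hφ, habs φ' hφ']
end

section
/- Let E be a real normed vector space and Ψ a nonempty compact set (in the operator norm) of continuous linear functionals E → ℝ. Define f(v) = sSup { ψ(v) : ψ ∈ Ψ }. Let u, v ∈ E and suppose there is no ψ ∈ Ψ with both ψ(u) = f(u) and ψ(v) = f(v), i.e. the maxima defining f(u) and f(v) are never attained by the same functional. Then f((u + v)/2) < (f(u) + f(v))/2. -/
theorem strict_convexity_criterion
    {E : Type*} [NormedAddCommGroup E] [NormedSpace ℝ E]
    (Ψ : Set (E →L[ℝ] ℝ)) (hΨne : Ψ.Nonempty) (hΨc : IsCompact Ψ)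
    (f : E → ℝ) (hf : ∀ v : E, f v = sSup {r : ℝ | ∃ ψ ∈ Ψ, r = ψ v})
    (u v : E)
    (h : ¬ ∃ ψ ∈ Ψ, ψ u = f u ∧ ψ v = f v) :
    f (((1 : ℝ) / 2) • (u + v)) < (f u + f v) / 2 := by
  have key : ∀ w : E, {r : ℝ | ∃ ψ ∈ Ψ, r = ψ w} = (fun ψ : E →L[ℝ] ℝ => ψ w) '' Ψ := by
    intro w
    ext r
    simp [Set.mem_image, eq_comm]
  have hcont : ∀ w : E, Continuous (fun ψ : E →L[ℝ] ℝ => ψ w) :=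
    fun w => (ContinuousLinearMap.apply ℝ ℝ w).continuous
  have hcomp : ∀ w : E, IsCompact ((fun ψ : E →L[ℝ] ℝ => ψ w) '' Ψ) :=
    fun w => hΨc.image (hcont w)
  have hbdd : ∀ w : E, ∀ ψ ∈ Ψ, ψ w ≤ f w := by
    intro w ψ hψ
    rw [hf, key]
    exact le_csSup (hcomp w).bddAbove ⟨ψ, hψ, rfl⟩
  -- maximum attained at midpoint
  obtain ⟨ψ₀, hψ₀, hmax⟩ : ∃ ψ₀ ∈ Ψ, ψ₀ (((1:ℝ)/2) • (u + v)) = f (((1:ℝ)/2) • (u + v)) := by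
    have := (hcomp (((1:ℝ)/2) • (u + v))).sSup_mem (hΨne.image _)
    obtain ⟨ψ₀, hψ₀, heq⟩ := this
    exact ⟨ψ₀, hψ₀, by rw [hf, key]; exact heq⟩
  -- ψ₀ cannot attain both maxima
  have hstrict : ψ₀ u + ψ₀ v < f u + f v := by
    have hu := hbdd u ψ₀ hψ₀
    have hv := hbdd v ψ₀ hψ₀
    rcases eq_or_lt_of_le hu with hu' | hu'
    · rcases eq_or_lt_of_le hv with hv' | hv'
      · exact absurd ⟨ψ₀, hψ₀, hu', hv'⟩ h
      · linarith
    · linarith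
  calc f (((1:ℝ)/2) • (u + v)) = ψ₀ (((1:ℝ)/2) • (u + v)) := hmax.symm
    _ = (ψ₀ u + ψ₀ v) / 2 := by simp [map_smul, map_add]; ring
    _ < (f u + f v) / 2 := by linarith
end

section
/- Let n ≥ 1 and p : Fin n → ℂ with p 0 = 0 and p j ≠ 0 for all j ≠ 0, and suppose the set { p j : j } is not contained in any circle of ℂ nor in any real-affine line of ℂ. For m ∈ ℂ with m ≠ p j for all j, and v ∈ ℂ, define N(m, v) = (max over j of Re( v / (m − p j) )) − (min over j of Re( v / (m − p j) )), and define H(m, v) = Real.sqrt( (Re(v · conj m))² / |m|⁴ + (Im(v · conj m))² / |m|² ). Then there exist C ≥ 1 and r₀ > 0 such that for all m ∈ ℂ with 0 < |m| < r₀ and all v ∈ ℂ: H(m, v) / C ≤ N(m, v) ≤ C · H(m, v). -/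
open Complex

lemma aux_real_smul (z e : ℂ) (he : e ≠ 0) (h : (z * (starRingEnd ℂ) e).im = 0) :
    ∃ t : ℝ, z = (t : ℂ) * e := by
  refine ⟨(z * (starRingEnd ℂ) e).re / ‖e‖ ^ 2, ?_⟩
  have h1 : z * (starRingEnd ℂ) e = (((z * (starRingEnd ℂ) e).re : ℝ) : ℂ) :=
    Complex.ext rfl (by simpa using h)
  have h2 : (starRingEnd ℂ) e * e = ((‖e‖ ^ 2 : ℝ) : ℂ) := by
    rw [mul_comm, Complex.mul_conj, Complex.normSq_eq_norm_sq]
  have key : z * ((‖e‖ ^ 2 : ℝ) : ℂ) = (((z * (starRingEnd ℂ) e).re : ℝ) : ℂ) * e := by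
    conv_lhs => rw [← h2, ← mul_assoc, h1]
  have hne' : ((‖e‖ : ℝ) : ℂ) ≠ 0 := by
    simpa using he
  push_cast
  rw [div_mul_eq_mul_div, eq_div_iff (pow_ne_zero 2 hne')]
  push_cast at key
  linear_combination key

lemma aux_lin (e₁ e₂ : ℂ) (hD : (e₁ * (starRingEnd ℂ) e₂).im ≠ 0) (v : ℂ) :
    ‖v‖ ≤ ((|e₁.re| + |e₁.im| + |e₂.re| + |e₂.im|) / |(e₁ * (starRingEnd ℂ) e₂).im|) *
      max |(v * e₁).re| |(v * e₂).re| := by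
  set D := (e₁ * (starRingEnd ℂ) e₂).im with hDdef
  set u₁ := (v * e₁).re with hu₁
  set u₂ := (v * e₂).re with hu₂
  have hDval : D = e₁.im * e₂.re - e₁.re * e₂.im := by
    simp [hDdef, Complex.mul_im, Complex.conj_re, Complex.conj_im]; ring
  have hx : v.re * D = -e₂.im * u₁ + e₁.im * u₂ := by
    simp [hDval, hu₁, hu₂, Complex.mul_re]; ring
  have hy : v.im * D = -e₂.re * u₁ + e₁.re * u₂ := by
    simp [hDval, hu₁, hu₂, Complex.mul_re]; ring
  set U := max |u₁| |u₂| with hUdef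
  have hu₁U : |u₁| ≤ U := le_max_left _ _
  have hu₂U : |u₂| ≤ U := le_max_right _ _
  have hU : 0 ≤ U := le_trans (abs_nonneg _) hu₁U
  have hDpos : 0 < |D| := abs_pos.mpr hD
  rw [div_mul_eq_mul_div, le_div_iff₀ hDpos]
  calc ‖v‖ * |D| ≤ (|v.re| + |v.im|) * |D| := by
        exact mul_le_mul_of_nonneg_right (Complex.norm_le_abs_re_add_abs_im v) (abs_nonneg _)
    _ = |v.re * D| + |v.im * D| := by rw [add_mul, abs_mul, abs_mul]
    _ ≤ (|e₂.im| * |u₁| + |e₁.im| * |u₂|) + (|e₂.re| * |u₁| + |e₁.re| * |u₂|) := by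
        rw [hx, hy]
        gcongr ?_ + ?_ <;>
          refine (abs_add_le _ _).trans (by rw [abs_mul, abs_mul, abs_neg])
    _ ≤ (|e₂.im| * U + |e₁.im| * U) + (|e₂.re| * U + |e₁.re| * U) := by
        gcongr
    _ = (|e₁.re| + |e₁.im| + |e₂.re| + |e₂.im|) * U := by ring


lemma exists_indep
    (n : ℕ) (hn : 0 < n) (p : Fin n → ℂ)
    (hp0 : p ⟨0, hn⟩ = 0)
    (hpj : ∀ j : Fin n, j ≠ ⟨0, hn⟩ → p j ≠ 0)
    (hcircle : ¬ ∃ (c : ℂ) (r : ℝ), 0 < r ∧ ∀ j : Fin n, ‖p j - c‖ = r)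
    (hline : ¬ ∃ (q e : ℂ), e ≠ 0 ∧ ∀ j : Fin n, ∃ t : ℝ, p j = q + (t : ℂ) * e) :
    ∃ j k l : Fin n, j ≠ ⟨0, hn⟩ ∧ k ≠ ⟨0, hn⟩ ∧ l ≠ ⟨0, hn⟩ ∧
      ((((p k)⁻¹ - (p j)⁻¹) * (starRingEnd ℂ) ((p l)⁻¹ - (p j)⁻¹)).im ≠ 0) := by
  by_contra hcon
  push_neg at hcon
  set i0 : Fin n := ⟨0, hn⟩ with hi0
  by_cases hall : ∀ j k : Fin n, j ≠ i0 → k ≠ i0 → p j = p k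
  · apply hline
    by_cases hex : ∃ j : Fin n, j ≠ i0
    · obtain ⟨j₁, hj₁⟩ := hex
      refine ⟨0, p j₁, hpj j₁ hj₁, fun i => ?_⟩
      by_cases hi : i = i0
      · exact ⟨0, by simp [hi, hp0]⟩
      · exact ⟨1, by rw [hall i j₁ hi hj₁]; push_cast; ring⟩
    · push_neg at hex
      refine ⟨0, 1, one_ne_zero, fun i => ⟨0, by rw [hex i]; simp [hp0]⟩⟩
  · push_neg at hall
    obtain ⟨j, k, hj, hk, hjk⟩ := hall
    set w : Fin n → ℂ := fun i => (p i)⁻¹ with hw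
    set e : ℂ := w k - w j with he
    have hwne : ∀ i : Fin n, i ≠ i0 → w i ≠ 0 := fun i hi => inv_ne_zero (hpj i hi)
    have hepos : e ≠ 0 := by
      simp only [he, sub_ne_zero, hw]
      intro hcontra
      apply hjk
      have := congrArg (·⁻¹) hcontra
      simpa [inv_inv] using this.symm
    have hlin : ∀ l : Fin n, l ≠ i0 → ∃ t : ℝ, w l = w j + (t : ℂ) * e := by
      intro l hl
      have h0 : ((w k - w j) * (starRingEnd ℂ) (w l - w j)).im = 0 := hcon j k l hj hk hl
      have h1 : ((w l - w j) * (starRingEnd ℂ) e).im = 0 := by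
        have h2 : ((w l - w j) * (starRingEnd ℂ) (w k - w j)).im
            = -(((w k - w j) * (starRingEnd ℂ) (w l - w j)).im) := by
          simp [Complex.mul_im, Complex.conj_re, Complex.conj_im]; ring
        rw [he, h2, h0, neg_zero]
      obtain ⟨t, ht⟩ := aux_real_smul _ _ hepos h1
      exact ⟨t, by linear_combination ht⟩
    set c : ℝ := (w j * (starRingEnd ℂ) e).im with hc
    have hconst : ∀ l : Fin n, l ≠ i0 → (w l * (starRingEnd ℂ) e).im = c := by
      intro l hl
      obtain ⟨t, ht⟩ := hlin l hl
      rw [ht, add_mul, Complex.add_im, mul_assoc, Complex.mul_conj]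
      norm_cast
      simp [hc]
    by_cases hc0 : c = 0
    · apply hline
      refine ⟨0, e⁻¹, inv_ne_zero hepos, fun i => ?_⟩
      by_cases hi : i = i0
      · exact ⟨0, by simp [hi, hp0]⟩
      · have h2 : (w i * (starRingEnd ℂ) e).im = 0 := by rw [hconst i hi, hc0]
        obtain ⟨t, ht⟩ := aux_real_smul _ _ hepos h2
        have htne : (t : ℂ) ≠ 0 := by
          intro h3
          exact hwne i hi (by rw [ht, h3, zero_mul])
        refine ⟨t⁻¹, ?_⟩
        have hpw : p i = (w i)⁻¹ := by simp [hw]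
        rw [hpw, ht]
        push_cast
        rw [mul_inv]
        ring
    · apply hcircle
      set ctr : ℂ := -(Complex.I * (starRingEnd ℂ) e) / (2 * (c : ℂ)) with hctr
      have hcc : ((c : ℝ) : ℂ) ≠ 0 := by exact_mod_cast hc0
      have hctrne : ctr ≠ 0 := by
        apply div_ne_zero
        · simp [hepos]
        · simp [hc0]
      have hconjctr : (starRingEnd ℂ) ctr = (Complex.I * e) / (2 * (c : ℂ)) := by
        rw [hctr]
        simp only [map_div₀, map_neg, map_mul, Complex.conj_I, Complex.conj_conj,
          Complex.conj_ofReal, map_ofNat]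
        ring
      refine ⟨ctr, ‖ctr‖, by simpa using hctrne, fun i => ?_⟩
      by_cases hi : i = i0
      · simp [hi, hp0]
      · have hpi : p i ≠ 0 := hpj i hi
        have h2 : ((p i)⁻¹ * (starRingEnd ℂ) e).im = c := hconst i hi
        have hnsq : Complex.normSq (p i) ≠ 0 := by simpa using hpi
        have h3 : (e * p i).im = -c * Complex.normSq (p i) := by
          rw [Complex.inv_def] at h2
          have h2' : ((starRingEnd ℂ) (p i) * (((Complex.normSq (p i))⁻¹ : ℝ) : ℂ) * (starRingEnd ℂ) e).im
              = (Complex.normSq (p i))⁻¹ * (-(e * p i).im) := by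
            rw [mul_comm ((starRingEnd ℂ) (p i)) _, mul_assoc, Complex.im_ofReal_mul]
            congr 1
            simp [Complex.mul_im, Complex.conj_re, Complex.conj_im]; ring
          rw [h2'] at h2
          field_simp at h2
          simp only [Complex.mul_im]
          linarith [Complex.mul_im e (p i)]
        have h5 : e * p i - (starRingEnd ℂ) e * (starRingEnd ℂ) (p i)
            = 2 * Complex.I * (((e * p i).im : ℝ) : ℂ) := by
          have h5' := Complex.sub_conj (e * p i)
          rw [map_mul] at h5'
          rw [h5']; push_cast; ring
        rw [h3] at h5
        push_cast at h5
        have h6 : (starRingEnd ℂ) (p i) * p i = ((Complex.normSq (p i) : ℝ) : ℂ) := by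
          rw [mul_comm, Complex.mul_conj]
        have hA : (2*(c:ℂ)) * ctr = -(Complex.I * (starRingEnd ℂ) e) := by
          rw [hctr]; field_simp
        have hB : (2*(c:ℂ)) * (starRingEnd ℂ) ctr = Complex.I * e := by
          rw [hconjctr]; field_simp
        have h4' : (2*(c:ℂ))^2 * ((p i - ctr) * ((starRingEnd ℂ) (p i) - (starRingEnd ℂ) ctr))
            = (2*(c:ℂ))^2 * (ctr * (starRingEnd ℂ) ctr) := by
          linear_combination (-2*(c:ℂ)*(p i)) * hB + (-2*(c:ℂ)*((starRingEnd ℂ) (p i))) * hA +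
            (-2*(c:ℂ)*Complex.I) * h5 + (4*(c:ℂ)^2) * h6 +
            (4*(c:ℂ)^2*((Complex.normSq (p i) : ℝ):ℂ)) * Complex.I_sq
        have h4 : (p i - ctr) * (starRingEnd ℂ) (p i - ctr) = ctr * (starRingEnd ℂ) ctr := by
          have h2c : (2*(c:ℂ))^2 ≠ 0 := pow_ne_zero _ (mul_ne_zero two_ne_zero hcc)
          have h9 := mul_left_cancel₀ h2c h4'
          rw [map_sub]; exact h9
        have h7 : Complex.normSq (p i - ctr) = Complex.normSq ctr := by
          have h8 := h4
          rw [Complex.mul_conj, Complex.mul_conj] at h8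
          exact_mod_cast h8
        rw [Complex.norm_def, Complex.norm_def, h7]

set_option maxHeartbeats 2000000 in
theorem finsler_vs_hyperbolic_near_cusp
    (n : ℕ) (hn : 0 < n) (p : Fin n → ℂ)
    (hp0 : p ⟨0, hn⟩ = 0)
    (hpj : ∀ j : Fin n, j ≠ ⟨0, hn⟩ → p j ≠ 0)
    (hcircle : ¬ ∃ (c : ℂ) (r : ℝ), 0 < r ∧ ∀ j : Fin n, ‖p j - c‖ = r)
    (hline : ¬ ∃ (q e : ℂ), e ≠ 0 ∧ ∀ j : Fin n, ∃ t : ℝ, p j = q + (t : ℂ) * e) :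
    ∃ C : ℝ, 1 ≤ C ∧ ∃ r₀ : ℝ, 0 < r₀ ∧
      ∀ m : ℂ, 0 < ‖m‖ → ‖m‖ < r₀ → ∀ v : ℂ,
        (Real.sqrt (((v * (starRingEnd ℂ) m).re) ^ 2 / (‖m‖) ^ 4 +
            ((v * (starRingEnd ℂ) m).im) ^ 2 / (‖m‖) ^ 2)) / C ≤
          sSup (Set.range fun j : Fin n => (v / (m - p j)).re) -
            sInf (Set.range fun j : Fin n => (v / (m - p j)).re) ∧
        sSup (Set.range fun j : Fin n => (v / (m - p j)).re) -
            sInf (Set.range fun j : Fin n => (v / (m - p j)).re) ≤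
          C * Real.sqrt (((v * (starRingEnd ℂ) m).re) ^ 2 / (‖m‖) ^ 4 +
            ((v * (starRingEnd ℂ) m).im) ^ 2 / (‖m‖) ^ 2) := by
  obtain ⟨j, k, l, hj, hk, hl, hD⟩ := exists_indep n hn p hp0 hpj hcircle hline
  set i0 : Fin n := ⟨0, hn⟩ with hi0
  set e₁ : ℂ := (p k)⁻¹ - (p j)⁻¹ with he₁
  set e₂ : ℂ := (p l)⁻¹ - (p j)⁻¹ with he₂
  clear_value i0 e₁ e₂
  have he₁ne : e₁ ≠ 0 := by
    intro h; apply hD; rw [h]; simp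
  obtain ⟨K, hKpos, hlinear⟩ : ∃ K : ℝ, 0 < K ∧
      ∀ u : ℂ, ‖u‖ ≤ K * max |(u * e₁).re| |(u * e₂).re| := by
    refine ⟨(|e₁.re| + |e₁.im| + |e₂.re| + |e₂.im|) / |(e₁ * (starRingEnd ℂ) e₂).im|,
      ?_, fun u => aux_lin e₁ e₂ hD u⟩
    apply div_pos ?_ (abs_pos.mpr hD)
    have h1 : 0 < ‖e₁‖ := norm_pos_iff.mpr he₁ne
    have h2 := Complex.norm_le_abs_re_add_abs_im e₁
    have h3 : (0:ℝ) ≤ |e₂.re| := abs_nonneg _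
    have h4 : (0:ℝ) ≤ |e₂.im| := abs_nonneg _
    linarith
  obtain ⟨δ, hδpos, hδle⟩ : ∃ δ : ℝ, 0 < δ ∧
      ∀ i : Fin n, i ≠ i0 → δ ≤ ‖p i‖ := by
    classical
    set s : Finset (Fin n) := Finset.univ.filter (fun i => i ≠ i0) with hs
    have hjs : j ∈ s := by simp [hs, hj]
    have hsne : ((s.image fun i => ‖p i‖)).Nonempty :=
      ⟨_, Finset.mem_image_of_mem _ hjs⟩
    refine ⟨(s.image fun i => ‖p i‖).min' hsne, ?_, ?_⟩
    · obtain ⟨i, his, hieq⟩ :=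
        Finset.mem_image.mp ((s.image fun i => ‖p i‖).min'_mem hsne)
      rw [← hieq]
      exact norm_pos_iff.mpr (hpj i (by simpa [hs] using his))
    · exact fun i hi => Finset.min'_le _ _ (Finset.mem_image_of_mem _ (by simp [hs, hi]))
  have hδ0 : δ ≠ 0 := ne_of_gt hδpos
  have h8δ : 0 < 8/δ := div_pos (by norm_num) hδpos
  have h4Kδ : 0 < 4*K/δ := div_pos (by linarith) hδpos
  set C : ℝ := 3 + 8/δ + 2*K + 4*K/δ with hC
  have hCpos : 0 < C := by rw [hC]; linarith
  have hCge1 : 1 ≤ C := by rw [hC]; linarith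
  clear_value C
  set r₀ : ℝ := min (δ/2) (min 1 (δ^2/(8*K))) with hr₀
  have hr₀pos : 0 < r₀ :=
    lt_min (half_pos hδpos) (lt_min one_pos (div_pos (pow_pos hδpos 2) (by linarith)))
  refine ⟨C, hCge1, r₀, hr₀pos, ?_⟩
  intro m hm0 hmr v
  have hm : m ≠ 0 := by
    intro h; rw [h] at hm0; simp at hm0
  set a : ℝ := ‖m‖ with ha
  clear_value a
  have hv0 : 0 ≤ ‖v‖ := norm_nonneg v
  have hma : a ≤ δ/2 := (lt_of_lt_of_le hmr (min_le_left _ _)).le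
  have hm1 : a ≤ 1 := (lt_of_lt_of_le hmr ((min_le_right _ _).trans (min_le_left _ _))).le
  have hmK : a ≤ δ^2/(8*K) := (lt_of_lt_of_le hmr ((min_le_right _ _).trans (min_le_right _ _))).le
  have hsep : ∀ i : Fin n, i ≠ i0 → δ/2 ≤ ‖m - p i‖ := by
    intro i hi
    have h1 : ‖p i‖ - ‖m‖ ≤ ‖p i - m‖ := by
      simpa using norm_sub_norm_le (p i) m
    have h2 : ‖p i - m‖ = ‖m - p i‖ := by
      rw [← norm_neg, neg_sub]
    have h3 := hδle i hi
    rw [h2] at h1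
    rw [← ha] at h1
    linarith
  have hnei : ∀ i : Fin n, m - p i ≠ 0 := by
    intro i
    by_cases hi : i = i0
    · rw [hi, hp0, sub_zero]; exact hm
    · intro h0
      have := hsep i hi
      rw [h0] at this
      simp at this
      linarith
  set F : Fin n → ℝ := fun i => (v / (m - p i)).re with hF
  set A : ℝ := (v/m).re with hA
  set B : ℝ := (v/m).im with hB
  clear_value F A B
  have hnsqm : m * (starRingEnd ℂ) m = ((a^2 : ℝ) : ℂ) := by
    rw [ha, Complex.mul_conj, Complex.normSq_eq_norm_sq]
  have hvm : v * (starRingEnd ℂ) m = (v/m) * ((a^2 : ℝ):ℂ) := by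
    rw [← hnsqm]; field_simp
  have hre : (v * (starRingEnd ℂ) m).re = A * a^2 := by
    rw [hvm, mul_comm, Complex.re_ofReal_mul, ← hA]; ring
  have him : (v * (starRingEnd ℂ) m).im = B * a^2 := by
    rw [hvm, mul_comm, Complex.im_ofReal_mul, ← hB]; ring
  set HH : ℝ := Real.sqrt (A^2 + a^2*B^2) with hHH
  have ha0 : a ≠ 0 := ne_of_gt hm0
  have hHeq : Real.sqrt ((v * (starRingEnd ℂ) m).re ^ 2 / a ^ 4 +
      (v * (starRingEnd ℂ) m).im ^ 2 / a ^ 2) = HH := by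
    rw [hre, him, hHH]
    congr 1
    field_simp
  have hHH0 : 0 ≤ HH := Real.sqrt_nonneg _
  have hAle : |A| ≤ HH := by
    rw [← Real.sqrt_sq_eq_abs]
    exact Real.sqrt_le_sqrt (by nlinarith [sq_nonneg (a*B)])
  have haBle : a * |B| ≤ HH := by
    have h1 : a * |B| = Real.sqrt ((a*B)^2) := by
      rw [Real.sqrt_sq_eq_abs, abs_mul, _root_.abs_of_nonneg hm0.le]
    rw [h1]
    exact Real.sqrt_le_sqrt (by nlinarith)
  have hHHle : HH ≤ |A| + a*|B| := by
    have h1 : A^2 + a^2*B^2 ≤ (|A| + a*|B|)^2 := by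
      nlinarith [abs_nonneg A, abs_nonneg B, _root_.sq_abs A, _root_.sq_abs B,
        mul_nonneg (abs_nonneg A) (mul_nonneg hm0.le (abs_nonneg B))]
    calc HH ≤ Real.sqrt ((|A| + a*|B|)^2) := Real.sqrt_le_sqrt h1
      _ = |A| + a*|B| := Real.sqrt_sq (add_nonneg (abs_nonneg _) (mul_nonneg hm0.le (abs_nonneg _)))
  have hvmabs : ‖v‖ = ‖v/m‖ * a := by
    rw [ha, ← norm_mul, div_mul_cancel₀ v hm]
  have hvle2 : ‖v‖ ≤ 2 * HH := by
    have h1 : ‖v/m‖ ≤ |A| + |B| := by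
      rw [hA, hB]; exact Complex.norm_le_abs_re_add_abs_im _
    have h2 : ‖v‖ ≤ (|A| + |B|) * a := by
      rw [hvmabs]; exact mul_le_mul_of_nonneg_right h1 hm0.le
    nlinarith [hAle, haBle, abs_nonneg A, abs_nonneg B]
  have hvB : a * |B| ≤ ‖v‖ := by
    have h1 : |B| ≤ ‖v/m‖ := by
      rw [hB]; exact Complex.abs_im_le_norm _
    rw [hvmabs]
    nlinarith
  have hF0 : F i0 = A := by
    simp only [hF, hA, hp0, sub_zero]
  have hFsmall : ∀ i, i ≠ i0 → |F i| ≤ 2*(‖v‖)/δ := by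
    intro i hi
    have h1 : |F i| ≤ ‖v/(m - p i)‖ := by
      simp only [hF]; exact Complex.abs_re_le_norm _
    rw [norm_div] at h1
    have h3 : ‖v‖ / ‖m - p i‖ ≤ ‖v‖ / (δ/2) :=
      div_le_div_of_nonneg_left hv0 (half_pos hδpos) (hsep i hi)
    have h4 : ‖v‖ / (δ/2) = 2*(‖v‖)/δ := by
      field_simp
    linarith
  set G : Fin n → ℝ := fun i => (-(v * (p i)⁻¹)).re with hG
  clear_value G
  have hGpert : ∀ i, i ≠ i0 → |F i - G i| ≤ 2*(‖v‖)*a/δ^2 := by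
    intro i hi
    have hpi : p i ≠ 0 := hpj i hi
    have hfe : v/(m - p i) - (-(v * (p i)⁻¹)) = v * m / ((m - p i) * p i) := by
      field_simp [hnei i]
      ring
    have h1 : F i - G i = (v * m / ((m - p i) * p i)).re := by
      simp only [hF, hG]
      rw [← Complex.sub_re, hfe]
    rw [h1]
    have h2 : |(v * m / ((m - p i) * p i)).re| ≤ ‖v * m / ((m - p i) * p i)‖ :=
      Complex.abs_re_le_norm _
    rw [norm_div, norm_mul, norm_mul] at h2
    have h3 : ‖v‖ * a / (‖m - p i‖ * ‖p i‖)
        ≤ ‖v‖ * a / ((δ/2) * δ) := by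
      exact div_le_div_of_nonneg_left (mul_nonneg hv0 hm0.le)
        (mul_pos (half_pos hδpos) hδpos)
        (mul_le_mul (hsep i hi) (hδle i hi) hδpos.le (norm_nonneg _))
    have h4 : ‖v‖ * a / ((δ/2) * δ) = 2*(‖v‖)*a/δ^2 := by
      field_simp
    rw [← ha] at h2
    ring_nf at h2 h3 h4 ⊢
    linarith
  have hG1 : G k - G j = -((v * e₁).re) := by
    have h1 : (-(v * (p k)⁻¹)) - (-(v * (p j)⁻¹)) = -(v * e₁) := by
      rw [he₁]; ring
    simp only [hG]
    rw [← Complex.sub_re, h1, Complex.neg_re]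
  have hG2 : G l - G j = -((v * e₂).re) := by
    have h1 : (-(v * (p l)⁻¹)) - (-(v * (p j)⁻¹)) = -(v * e₂) := by
      rw [he₂]; ring
    simp only [hG]
    rw [← Complex.sub_re, h1, Complex.neg_re]
  have hbddA : BddAbove (Set.range F) := (Set.finite_range F).bddAbove
  have hbddB : BddBelow (Set.range F) := (Set.finite_range F).bddBelow
  have hnefin : Nonempty (Fin n) := ⟨i0⟩
  have hrne : (Set.range F).Nonempty := Set.range_nonempty F
  have hle1 : ∀ i, F i ≤ sSup (Set.range F) := fun i => le_csSup hbddA ⟨i, rfl⟩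
  have hle2 : ∀ i, sInf (Set.range F) ≤ F i := fun i => csInf_le hbddB ⟨i, rfl⟩
  set N : ℝ := sSup (Set.range F) - sInf (Set.range F) with hN
  clear_value N
  have hNd : ∀ i i', F i - F i' ≤ N := fun i i' => by
    rw [hN]; exact sub_le_sub (hle1 i) (hle2 i')
  have hNd' : ∀ i i', |F i - F i'| ≤ N := fun i i' =>
    abs_sub_le_iff.mpr ⟨hNd i i', hNd i' i⟩
  have hN0 : 0 ≤ N := by
    have := hNd i0 i0
    simpa using this
  have hNle : N ≤ 2*|A| + 4*(‖v‖)/δ := by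
    have hM : ∀ i, |F i| ≤ |A| + 2*(‖v‖)/δ := by
      intro i
      by_cases hi : i = i0
      · rw [hi, hF0]
        have h5 : (0:ℝ) ≤ 2*(‖v‖)/δ := by
          apply div_nonneg (by linarith) hδpos.le
        linarith
      · have h1 := hFsmall i hi
        have h2 : (0:ℝ) ≤ |A| := abs_nonneg A
        linarith
    have h1 : sSup (Set.range F) ≤ |A| + 2*(‖v‖)/δ := by
      apply csSup_le hrne
      rintro x ⟨i, rfl⟩
      exact (le_abs_self _).trans (hM i)
    have h2 : -(|A| + 2*(‖v‖)/δ) ≤ sInf (Set.range F) := by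
      apply le_csInf hrne
      rintro x ⟨i, rfl⟩
      have h3 := hM i
      have h4 := neg_abs_le (F i)
      linarith
    rw [hN]
    ring_nf at h1 h2 ⊢
    linarith
  have hL1 : |(v*e₁).re| ≤ N + 4*(‖v‖)*a/δ^2 := by
    have h1 : |(v*e₁).re| = |G k - G j| := by rw [hG1, abs_neg]
    have h2 : G k - G j = -(F k - G k) + (F k - F j) + (F j - G j) := by ring
    have h3 : |G k - G j| ≤ |F k - G k| + |F k - F j| + |F j - G j| := by
      rw [h2]
      calc |(-(F k - G k) + (F k - F j)) + (F j - G j)|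
          ≤ |(-(F k - G k) + (F k - F j))| + |F j - G j| := abs_add_le _ _
        _ ≤ |(-(F k - G k))| + |F k - F j| + |F j - G j| := by
            have := abs_add_le (-(F k - G k)) (F k - F j)
            linarith
        _ = |F k - G k| + |F k - F j| + |F j - G j| := by rw [abs_neg]
    have h4 := hGpert k hk
    have h5 := hGpert j hj
    have h6 := hNd' k j
    rw [h1]
    ring_nf at h3 h4 h5 h6 ⊢
    linarith
  have hL2 : |(v*e₂).re| ≤ N + 4*(‖v‖)*a/δ^2 := by
    have h1 : |(v*e₂).re| = |G l - G j| := by rw [hG2, abs_neg]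
    have h2 : G l - G j = -(F l - G l) + (F l - F j) + (F j - G j) := by ring
    have h3 : |G l - G j| ≤ |F l - G l| + |F l - F j| + |F j - G j| := by
      rw [h2]
      calc |(-(F l - G l) + (F l - F j)) + (F j - G j)|
          ≤ |(-(F l - G l) + (F l - F j))| + |F j - G j| := abs_add_le _ _
        _ ≤ |(-(F l - G l))| + |F l - F j| + |F j - G j| := by
            have := abs_add_le (-(F l - G l)) (F l - F j)
            linarith
        _ = |F l - G l| + |F l - F j| + |F j - G j| := by rw [abs_neg]
    have h4 := hGpert l hl
    have h5 := hGpert j hj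
    have h6 := hNd' l j
    rw [h1]
    ring_nf at h3 h4 h5 h6 ⊢
    linarith
  have hvN : ‖v‖ ≤ 2*K*N := by
    have h1 := hlinear v
    have h2 : max |(v*e₁).re| |(v*e₂).re| ≤ N + 4*(‖v‖)*a/δ^2 := max_le hL1 hL2
    have h3 : K * max |(v*e₁).re| |(v*e₂).re| ≤ K * (N + 4*(‖v‖)*a/δ^2) :=
      mul_le_mul_of_nonneg_left h2 hKpos.le
    have h5 : 4*K*(‖v‖)*a ≤ 4*K*(‖v‖)*(δ^2/(8*K)) :=
      mul_le_mul_of_nonneg_left hmK (by positivity)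
    have h6 : 4*K*(‖v‖)*(δ^2/(8*K)) = (‖v‖)*δ^2/2 := by
      field_simp
      ring
    have h7 : K*(4*(‖v‖)*a/δ^2) ≤ (‖v‖)/2 := by
      rw [show K*(4*(‖v‖)*a/δ^2) = (4*K*(‖v‖)*a)/δ^2 by ring]
      rw [div_le_div_iff₀ (pow_pos hδpos 2) (by norm_num : (0:ℝ) < 2)]
      nlinarith
    have h8 : K * (N + 4*(‖v‖)*a/δ^2) = K*N + K*(4*(‖v‖)*a/δ^2) := by ring
    linarith
  have hAN : |A| ≤ N + 2*(‖v‖)/δ := by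
    have h1 : |F i0 - F j| ≤ N := hNd' i0 j
    have h2 := hFsmall j hj
    have h3 : |A| ≤ |F i0 - F j| + |F j| := by
      rw [← hF0]
      calc |F i0| = |(F i0 - F j) + F j| := by ring_nf
        _ ≤ |F i0 - F j| + |F j| := abs_add_le _ _
    linarith
  constructor
  · rw [hHeq, div_le_iff₀ hCpos]
    have h1 : HH ≤ N + 2*(‖v‖)/δ + ‖v‖ := by linarith
    have h2 : 2*(‖v‖)/δ ≤ 2*(2*K*N)/δ := by
      apply (div_le_div_iff_of_pos_right hδpos).mpr
      linarith
    have h9 : (1 + 4*K/δ + 2*K) ≤ C := by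
      rw [hC]
      linarith
    have h10 : (1 + 4*K/δ + 2*K)*N ≤ C*N := mul_le_mul_of_nonneg_right h9 hN0
    have h11 : 2*(2*K*N)/δ = (4*K/δ)*N := by ring
    nlinarith
  · rw [hHeq]
    have h5 : 4*(‖v‖)/δ ≤ 4*(2*HH)/δ := by
      apply (div_le_div_iff_of_pos_right hδpos).mpr
      linarith
    have h9 : (2 + 8/δ) ≤ C := by
      rw [hC]
      linarith
    have h10 : (2 + 8/δ)*HH ≤ C*HH := mul_le_mul_of_nonneg_right h9 hHH0
    have h11 : (2 + 8/δ)*HH = 2*HH + 8*HH/δ := by ring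
    have h12 : 4*(2*HH)/δ = 8*HH/δ := by ring
    nlinarith
end

section
/- Let Λ ⊆ ℝ be a compact set, let α, β ∈ Λ with α < β and Λ ∩ (α, β) = ∅ (so (α, β) is a connected component of the complement of Λ), and let ω, ω' ∈ (α, β) with α < ω < ω' < β. Then sSup { |(λ − ω)·(λ' − ω')| / (|(λ − ω')·(λ' − ω)|) : λ, λ' ∈ Λ } = ((β − ω)·(ω' − α)) / ((β − ω')·(ω − α)). In particular the supremum defining d_Λ(ω, ω') is attained at the endpoints α, β of the component, and d_Λ restricted to the component coincides with the Hilbert metric of the interval (α, β). -/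
theorem sup_crossratio_attained_at_endpoints
    (Λ : Set ℝ) (hΛc : IsCompact Λ)
    (α β : ℝ) (hα : α ∈ Λ) (hβ : β ∈ Λ) (hαβ : α < β)
    (hgap : Λ ∩ Set.Ioo α β = ∅)
    (ω ω' : ℝ) (h1 : α < ω) (h2 : ω < ω') (h3 : ω' < β) :
    sSup {r : ℝ | ∃ l ∈ Λ, ∃ l' ∈ Λ,
        r = |(l - ω) * (l' - ω')| / |(l - ω') * (l' - ω)|} =
      ((β - ω) * (ω' - α)) / ((β - ω') * (ω - α)) := by
  have hout : ∀ l ∈ Λ, l ≤ α ∨ β ≤ l := by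
    intro l hl
    by_contra h
    push_neg at h
    have : l ∈ Λ ∩ Set.Ioo α β := ⟨hl, h.1, h.2⟩
    simp [hgap] at this
  have hf : ∀ l, (l ≤ α ∨ β ≤ l) → |l - ω| / |l - ω'| ≤ (β - ω) / (β - ω') := by
    intro l hc
    have hd : (0:ℝ) < |l - ω'| := by
      rcases hc with hc | hc
      · rw [abs_pos]; intro h; nlinarith [sub_eq_zero.mp h]
      · rw [abs_pos]; intro h; nlinarith [sub_eq_zero.mp h]
    rw [div_le_div_iff₀ hd (by linarith)]
    rcases hc with hc | hc
    · rw [abs_of_nonpos (by linarith), abs_of_nonpos (by linarith)]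
      nlinarith
    · rw [abs_of_nonneg (by linarith), abs_of_nonneg (by linarith)]
      nlinarith
  have hg : ∀ l, (l ≤ α ∨ β ≤ l) → |l - ω'| / |l - ω| ≤ (ω' - α) / (ω - α) := by
    intro l hc
    have hd : (0:ℝ) < |l - ω| := by
      rcases hc with hc | hc
      · rw [abs_pos]; intro h; nlinarith [sub_eq_zero.mp h]
      · rw [abs_pos]; intro h; nlinarith [sub_eq_zero.mp h]
    rw [div_le_div_iff₀ hd (by linarith)]
    rcases hc with hc | hc
    · rw [abs_of_nonpos (by linarith), abs_of_nonpos (by linarith)]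
      nlinarith
    · rw [abs_of_nonneg (by linarith), abs_of_nonneg (by linarith)]
      nlinarith
  have hub : ∀ r ∈ {r : ℝ | ∃ l ∈ Λ, ∃ l' ∈ Λ,
        r = |(l - ω) * (l' - ω')| / |(l - ω') * (l' - ω)|},
      r ≤ ((β - ω) * (ω' - α)) / ((β - ω') * (ω - α)) := by
    rintro r ⟨l, hl, l', hl', rfl⟩
    rw [abs_mul, abs_mul, ← div_mul_div_comm, ← div_mul_div_comm]
    exact mul_le_mul (hf l (hout l hl)) (hg l' (hout l' hl'))
      (by positivity) (by apply div_nonneg <;> linarith)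
  have hmem : ((β - ω) * (ω' - α)) / ((β - ω') * (ω - α)) ∈
      {r : ℝ | ∃ l ∈ Λ, ∃ l' ∈ Λ,
        r = |(l - ω) * (l' - ω')| / |(l - ω') * (l' - ω)|} := by
    refine ⟨β, hβ, α, hα, ?_⟩
    rw [abs_of_nonpos (by nlinarith), abs_of_nonpos (by nlinarith)]
    ring_nf
  exact le_antisymm (csSup_le ⟨_, hmem⟩ hub) (le_csSup ⟨_, hub⟩ hmem)
end

section
/- Let a > 1 and let Λ ⊆ ℝ be a compact set with {−a, −1, 1, a} ⊆ Λ and Λ ⊆ [−a, −1] ∪ [1, a]. For λ ∈ ℝ define the linear form f_λ : ℝ² → ℝ by f_λ(x, y) = x − λ·y, and for nonzero u, u' ∈ ℝ² (with all the forms f_λ, λ ∈ Λ, nonvanishing at u and u') set S(u, u') = sSup { |f_λ(u)·f_{λ'}(u')| / (|f_λ(u')·f_{λ'}(u)|) : λ, λ' ∈ Λ }. Then: (i) for every u = (x, y) with |x| < |y| and every nonzero u' = (x', y') with |x'| > a·|y'|, one has S(u, u') ≥ a; (ii) S((0, 1), (1, 0)) = a. Consequently the distance d_Λ = log S between the two components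 (−1, 1) and ℝP¹ \ [−a, a] of the complement of Λ equals log a, which is the hyperbolic distance between the geodesics of the upper half-plane with endpoints {−1, 1} and {−a, a}. -/
/-- The supremum of the moduli of cross-ratios for points of `ℝP¹` represented by
nonzero vectors of `ℝ²`, where `λ ∈ Λ` is identified with the form `(x, y) ↦ x - λ y`. -/
noncomputable def projS (Λ : Set ℝ) (u u' : ℝ × ℝ) : ℝ :=
  sSup {r : ℝ | ∃ l ∈ Λ, ∃ l' ∈ Λ,
    r = |(u.1 - l * u.2) * (u'.1 - l' * u'.2)| /
        |(u'.1 - l * u'.2) * (u.1 - l' * u.2)|}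

set_option maxHeartbeats 1000000 in
theorem distance_between_components
    (a : ℝ) (ha : 1 < a)
    (Λ : Set ℝ) (hΛc : IsCompact Λ)
    (hmem : {-a, -1, 1, a} ⊆ Λ)
    (hsub : Λ ⊆ Set.Icc (-a) (-1) ∪ Set.Icc 1 a) :
    (∀ u : ℝ × ℝ, |u.1| < |u.2| →
      ∀ u' : ℝ × ℝ, u' ≠ 0 → a * |u'.2| < |u'.1| → a ≤ projS Λ u u') ∧
    projS Λ (0, 1) (1, 0) = a := by
  have ha0 : (0:ℝ) < a := by linarith
  have haΛ : a ∈ Λ := hmem (by simp)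
  have hnaΛ : -a ∈ Λ := hmem (by simp)
  have h1Λ : (1:ℝ) ∈ Λ := hmem (by simp)
  have hn1Λ : (-1:ℝ) ∈ Λ := hmem (by simp)
  have hbound : ∀ l ∈ Λ, 1 ≤ |l| ∧ |l| ≤ a := by
    intro l hl
    rcases hsub hl with ⟨h1, h2⟩ | ⟨h1, h2⟩
    · rw [abs_of_nonpos (by linarith)]; constructor <;> linarith
    · rw [abs_of_nonneg (by linarith)]; exact ⟨h1, h2⟩
  constructor
  · rintro ⟨x, y⟩ hxy ⟨x', y'⟩ - hx'
    simp only [projS]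
    dsimp only at hxy hx' ⊢
    have hy0 : 0 < |y| := lt_of_le_of_lt (abs_nonneg x) hxy
    have hx'0 : a * |y'| < |x'| := hx'
    have hlowd1 : ∀ l ∈ Λ, |x'| - a * |y'| ≤ |x' - l * y'| := by
      intro l hl
      have hb := (hbound l hl).2
      have h1 : |l * y'| ≤ a * |y'| := by
        rw [abs_mul]; exact mul_le_mul_of_nonneg_right hb (abs_nonneg y')
      have h2 := abs_sub_abs_le_abs_sub x' (l * y')
      linarith
    have hlowd2 : ∀ l ∈ Λ, |y| - |x| ≤ |x - l * y| := by
      intro l hl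
      have hb := (hbound l hl).1
      have h1 : |y| ≤ |l * y| := by
        rw [abs_mul]; nlinarith [abs_nonneg y]
      have h2 := abs_sub_abs_le_abs_sub (l * y) x
      rw [abs_sub_comm] at h2
      linarith
    have hup1 : ∀ l ∈ Λ, |x - l * y| ≤ |x| + a * |y| := by
      intro l hl
      have hb := (hbound l hl).2
      have h1 : |l * y| ≤ a * |y| := by
        rw [abs_mul]; exact mul_le_mul_of_nonneg_right hb (abs_nonneg y)
      have h2 := abs_sub x (l * y)
      linarith
    have hup2 : ∀ l ∈ Λ, |x' - l * y'| ≤ |x'| + a * |y'| := by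
      intro l hl
      have hb := (hbound l hl).2
      have h1 : |l * y'| ≤ a * |y'| := by
        rw [abs_mul]; exact mul_le_mul_of_nonneg_right hb (abs_nonneg y')
      have h2 := abs_sub x' (l * y')
      linarith
    set S : Set ℝ := {r : ℝ | ∃ l ∈ Λ, ∃ l' ∈ Λ,
      r = |(x - l * y) * (x' - l' * y')| / |(x' - l * y') * (x - l' * y)|} with hS
    have hub : ∀ r ∈ S, r ≤
        (|x| + a * |y|) * (|x'| + a * |y'|) / ((|x'| - a * |y'|) * (|y| - |x|)) := by
      rintro r ⟨l, hl, l', hl', rfl⟩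
      rw [abs_mul, abs_mul]
      apply div_le_div₀ (by positivity)
        (mul_le_mul (hup1 l hl) (hup2 l' hl') (abs_nonneg _) (by positivity))
        (by nlinarith)
        (mul_le_mul (hlowd1 l hl) (hlowd2 l' hl') (by linarith) (abs_nonneg _))
    have hbdd : BddAbove S := ⟨_, hub⟩
    have hdpos : ∀ l ∈ Λ, ∀ l' ∈ Λ, 0 < |(x' - l * y') * (x - l' * y)| := by
      intro l hl l' hl'
      rw [abs_mul]
      have h1 : 0 < |x' - l * y'| := lt_of_lt_of_le (by linarith) (hlowd1 l hl)
      have h2 : 0 < |x - l' * y| := lt_of_lt_of_le (by linarith) (hlowd2 l' hl')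
      positivity
    -- squared inequalities
    have hP : x ^ 2 < y ^ 2 := by nlinarith [sq_abs x, sq_abs y, abs_nonneg x]
    have hQ : a ^ 2 * y' ^ 2 < x' ^ 2 := by
      nlinarith [sq_abs x', sq_abs y', abs_nonneg y', mul_nonneg ha0.le (abs_nonneg y')]
    have hkey : a ^ 2 * ((x' ^ 2 - a ^ 2 * y' ^ 2) * (y ^ 2 - x ^ 2)) ≤
        (a ^ 2 * y ^ 2 - x ^ 2) * (x' ^ 2 - y' ^ 2) := by
      have t1 : (0:ℝ) ≤ (a ^ 2 - 1) * (y' ^ 2 * (y ^ 2 - x ^ 2)) := by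
        apply mul_nonneg (by nlinarith) (by nlinarith [sq_nonneg y'])
      have t2 : (0:ℝ) ≤ (a ^ 2 - 1) * (x ^ 2 * (x' ^ 2 - a ^ 2 * y' ^ 2)) := by
        apply mul_nonneg (by nlinarith) (by nlinarith [sq_nonneg x])
      have t3 : (0:ℝ) ≤ (a ^ 2 - 1) ^ 2 * (y ^ 2 * y' ^ 2) := by positivity
      nlinarith [t1, t2, t3]
    have h0 : (0:ℝ) ≤ a ^ 2 * ((x' ^ 2 - a ^ 2 * y' ^ 2) * (y ^ 2 - x ^ 2)) := by
      apply mul_nonneg (sq_nonneg a) (mul_nonneg (by linarith) (by linarith))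
    have hkey2 : a ^ 4 * (((x' ^ 2 - a ^ 2 * y' ^ 2) * (x ^ 2 - y ^ 2)) ^ 2) ≤
        ((x ^ 2 - a ^ 2 * y ^ 2) * (x' ^ 2 - y' ^ 2)) ^ 2 := by
      nlinarith [pow_le_pow_left₀ h0 hkey 2]
    have main : ∃ l ∈ Λ, ∃ l' ∈ Λ,
        a ≤ |(x - l * y) * (x' - l' * y')| / |(x' - l * y') * (x - l' * y)| := by
      by_contra hcon
      push_neg at hcon
      have g : ∀ l ∈ Λ, ∀ l' ∈ Λ,
          |(x - l * y) * (x' - l' * y')| < a * |(x' - l * y') * (x - l' * y)| := by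
        intro l hl l' hl'
        exact (div_lt_iff₀ (hdpos l hl l' hl')).mp (hcon l hl l' hl')
      have e1 := g a haΛ 1 h1Λ
      have e2 := g a haΛ (-1) hn1Λ
      have e3 := g (-a) hnaΛ 1 h1Λ
      have e4 := g (-a) hnaΛ (-1) hn1Λ
      have hd1 := hdpos a haΛ 1 h1Λ
      have hd2 := hdpos a haΛ (-1) hn1Λ
      have hd3 := hdpos (-a) hnaΛ 1 h1Λ
      have hd4 := hdpos (-a) hnaΛ (-1) hn1Λ
      have hn1' : (0:ℝ) ≤ |(x - a * y) * (x' - 1 * y')| := abs_nonneg _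
      have hn2' : (0:ℝ) ≤ |(x - a * y) * (x' - (-1) * y')| := abs_nonneg _
      have hn3' : (0:ℝ) ≤ |(x - (-a) * y) * (x' - 1 * y')| := abs_nonneg _
      have hn4' : (0:ℝ) ≤ |(x - (-a) * y) * (x' - (-1) * y')| := abs_nonneg _
      have q1 := mul_lt_mul'' e1 e2 hn1' hn2'
      have q2 := mul_lt_mul'' q1 e3 (mul_nonneg hn1' hn2') hn3'
      have q3 := mul_lt_mul'' q2 e4 (mul_nonneg (mul_nonneg hn1' hn2') hn3') hn4'
      have hNprod : |(x - a * y) * (x' - 1 * y')| * |(x - a * y) * (x' - (-1) * y')| *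
          |(x - (-a) * y) * (x' - 1 * y')| * |(x - (-a) * y) * (x' - (-1) * y')| =
          ((x ^ 2 - a ^ 2 * y ^ 2) * (x' ^ 2 - y' ^ 2)) ^ 2 := by
        simp only [← abs_mul]
        rw [show (x - a * y) * (x' - 1 * y') * ((x - a * y) * (x' - (-1) * y')) *
            ((x - (-a) * y) * (x' - 1 * y')) * ((x - (-a) * y) * (x' - (-1) * y')) =
            ((x ^ 2 - a ^ 2 * y ^ 2) * (x' ^ 2 - y' ^ 2)) ^ 2 from by ring]
        exact abs_of_nonneg (by positivity)
      have hDprod : |(x' - a * y') * (x - 1 * y)| * |(x' - a * y') * (x - (-1) * y)| *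
          |(x' - (-a) * y') * (x - 1 * y)| * |(x' - (-a) * y') * (x - (-1) * y)| =
          ((x' ^ 2 - a ^ 2 * y' ^ 2) * (x ^ 2 - y ^ 2)) ^ 2 := by
        simp only [← abs_mul]
        rw [show (x' - a * y') * (x - 1 * y) * ((x' - a * y') * (x - (-1) * y)) *
            ((x' - (-a) * y') * (x - 1 * y)) * ((x' - (-a) * y') * (x - (-1) * y)) =
            ((x' ^ 2 - a ^ 2 * y' ^ 2) * (x ^ 2 - y ^ 2)) ^ 2 from by ring]
        exact abs_of_nonneg (by positivity)
      have hD4 : a ^ 4 * (|(x' - a * y') * (x - 1 * y)| * |(x' - a * y') * (x - (-1) * y)| *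
          |(x' - (-a) * y') * (x - 1 * y)| * |(x' - (-a) * y') * (x - (-1) * y)|) =
          a ^ 4 * (((x' ^ 2 - a ^ 2 * y' ^ 2) * (x ^ 2 - y ^ 2)) ^ 2) := by
        rw [hDprod]
      linarith [q3, hkey2, hNprod, hD4]
    obtain ⟨l, hl, l', hl', hr⟩ := main
    exact le_trans hr (le_csSup hbdd ⟨l, hl, l', hl', rfl⟩)
  · simp only [projS]
    have hval : ∀ l l' : ℝ,
        |((0:ℝ) - l * 1) * ((1:ℝ) - l' * 0)| / |((1:ℝ) - l * 0) * ((0:ℝ) - l' * 1)| =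
        |l| / |l'| := by
      intro l l'
      rw [show ((0:ℝ) - l * 1) * ((1:ℝ) - l' * 0) = -l from by ring,
        show ((1:ℝ) - l * 0) * ((0:ℝ) - l' * 1) = -l' from by ring, abs_neg, abs_neg]
    have hub : ∀ r ∈ {r : ℝ | ∃ l ∈ Λ, ∃ l' ∈ Λ,
        r = |((0:ℝ) - l * 1) * ((1:ℝ) - l' * 0)| / |((1:ℝ) - l * 0) * ((0:ℝ) - l' * 1)|},
        r ≤ a := by
      rintro r ⟨l, hl, l', hl', rfl⟩
      rw [hval]
      have h1 := hbound l hl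
      have h2 := hbound l' hl'
      rw [div_le_iff₀ (by linarith [h2.1])]
      nlinarith [h1.2, h2.1, abs_nonneg l]
    have hmemA : a ∈ {r : ℝ | ∃ l ∈ Λ, ∃ l' ∈ Λ,
        r = |((0:ℝ) - l * 1) * ((1:ℝ) - l' * 0)| / |((1:ℝ) - l * 0) * ((0:ℝ) - l' * 1)|} := by
      refine ⟨a, haΛ, 1, h1Λ, ?_⟩
      rw [hval, abs_one, div_one, abs_of_pos ha0]
    exact le_antisymm (csSup_le ⟨a, hmemA⟩ hub) (le_csSup ⟨a, hub⟩ hmemA)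
end
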